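/- The following beta rule for machine values is admissible in CAU⁻σ: (q ▷ ⌊(λM̂)[e]⌋) applied to (q' ▷ C) reduces in zero or more CAU⁻σ steps to t(app(q,q'); β) ▷ ⌊M̂[(r ▷ C)·e]⌋. -/

import Mathlib

namespace CAU

/-! ## CAU⁻ syntax (de Bruijn, pure: no explicit operators) -/

/-- Trails of CAU⁻. -/
inductive NTr : Type
  | r : NTr
  | t : NTr → NTr → NTr
  | pb : NTr                      -- β
  | pbb : NTr                     -- β!
  | ti : NTr
  | lam : NTr → NTr
  | ap : NTr → NTr → NTr
  | lets : NTr → NTr → NTr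
  | tb : (Fin 9 → NTr) → NTr
  deriving Inhabited

/-- Terms of CAU⁻ (de Bruijn indices). -/
inductive NTm : Type
  | var : ℕ → NTm
  | lam : NTm → NTm
  | ap : NTm → NTm → NTm
  | lets : NTm → NTm → NTm
  | bang : NTr → NTm → NTm
  | ann : NTr → NTm → NTm         -- q ▷ M
  | insp : (Fin 9 → NTm) → NTm    -- ι(ϑ)
  deriving Inhabited

/-- Permutation (τ) reduction on CAU⁻ trails, closed under arbitrary contexts. -/
inductive TStepQ : NTr → NTr → Prop
  | tReflR (q) : TStepQ (.t q .r) q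
  | tReflL (q) : TStepQ (.t .r q) q
  | tbRefl : TStepQ (.tb fun _ => .r) .r
  | apRefl : TStepQ (.ap .r .r) .r
  | lamRefl : TStepQ (.lam .r) .r
  | letsRefl : TStepQ (.lets .r .r) .r
  | tAssoc (q₁ q₂ q₃) : TStepQ (.t (.t q₁ q₂) q₃) (.t q₁ (.t q₂ q₃))
  | tLam (q q') : TStepQ (.t (.lam q) (.lam q')) (.lam (.t q q'))
  | tLamT (q₁ q₁' q) :
      TStepQ (.t (.lam q₁) (.t (.lam q₁') q)) (.t (.lam (.t q₁ q₁')) q)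
  | tAp (q₁ q₂ q₁' q₂') :
      TStepQ (.t (.ap q₁ q₂) (.ap q₁' q₂')) (.ap (.t q₁ q₁') (.t q₂ q₂'))
  | tApT (q₁ q₂ q₁' q₂' q) :
      TStepQ (.t (.ap q₁ q₂) (.t (.ap q₁' q₂') q)) (.t (.ap (.t q₁ q₁') (.t q₂ q₂')) q)
  | tLets (q₁ q₂ q₁' q₂') :
      TStepQ (.t (.lets q₁ q₂) (.lets q₁' q₂')) (.lets (.t q₁ q₁') (.t q₂ q₂'))
  | tLetsT (q₁ q₂ q₁' q₂' q) :
      TStepQ (.t (.lets q₁ q₂) (.t (.lets q₁' q₂') q)) (.t (.lets (.t q₁ q₁') (.t q₂ q₂')) q)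
  | tTb (ζ₁ ζ₂) : TStepQ (.t (.tb ζ₁) (.tb ζ₂)) (.tb fun i => .t (ζ₁ i) (ζ₂ i))
  | tTbT (ζ₁ ζ₂ q) :
      TStepQ (.t (.tb ζ₁) (.t (.tb ζ₂) q)) (.t (.tb fun i => .t (ζ₁ i) (ζ₂ i)) q)
  | tL {q q''} (q') : TStepQ q q'' → TStepQ (.t q q') (.t q'' q')
  | tR {q' q''} (q) : TStepQ q' q'' → TStepQ (.t q q') (.t q q'')
  | lamC {q q'} : TStepQ q q' → TStepQ (.lam q) (.lam q')
  | apL {q q''} (q') : TStepQ q q'' → TStepQ (.ap q q') (.ap q'' q')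
  | apR {q' q''} (q) : TStepQ q' q'' → TStepQ (.ap q q') (.ap q q'')
  | letsL {q q''} (q') : TStepQ q q'' → TStepQ (.lets q q') (.lets q'' q')
  | letsR {q' q''} (q) : TStepQ q' q'' → TStepQ (.lets q q') (.lets q q'')
  | tbC {ζ} (i : Fin 9) {q'} : TStepQ (ζ i) q' →
      TStepQ (.tb ζ) (.tb (Function.update ζ i q'))

/-- Permutation (τ) reduction on CAU⁻ terms, closed under arbitrary contexts. -/
inductive TStepN : NTm → NTm → Prop
  | annRefl (M) : TStepN (.ann .r M) M
  | annAnn (q q' M) : TStepN (.ann q (.ann q' M)) (.ann (.t q q') M)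
  | bangAnn (q q' M) : TStepN (.bang q (.ann q' M)) (.bang (.t q q') M)
  | lamAnn (q M) : TStepN (.lam (.ann q M)) (.ann (.lam q) (.lam M))
  | apAnnL (q M N) : TStepN (.ap (.ann q M) N) (.ann (.ap q .r) (.ap M N))
  | apAnnR (q M N) : TStepN (.ap M (.ann q N)) (.ann (.ap .r q) (.ap M N))
  | letsAnnL (q M N) : TStepN (.lets (.ann q M) N) (.ann (.lets q .r) (.lets M N))
  | letsAnnR (q M N) : TStepN (.lets M (.ann q N)) (.ann (.lets .r q) (.lets M N))
  | inspAnn (ϑ : Fin 9 → NTm) (i : Fin 9) (q M) : ϑ i = .ann q M →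
      TStepN (.insp ϑ)
        (.ann (.tb (Function.update (fun _ => NTr.r) i q)) (.insp (Function.update ϑ i M)))
  | lamC {M M'} : TStepN M M' → TStepN (.lam M) (.lam M')
  | apL {M M'} (N) : TStepN M M' → TStepN (.ap M N) (.ap M' N)
  | apR {N N'} (M) : TStepN N N' → TStepN (.ap M N) (.ap M N')
  | letsL {M M'} (N) : TStepN M M' → TStepN (.lets M N) (.lets M' N)
  | letsR {N N'} (M) : TStepN N N' → TStepN (.lets M N) (.lets M N')
  | bangQ {q q'} (M) : TStepQ q q' → TStepN (.bang q M) (.bang q' M)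
  | bangM {M M'} (q) : TStepN M M' → TStepN (.bang q M) (.bang q M')
  | annQ {q q'} (M) : TStepQ q q' → TStepN (.ann q M) (.ann q' M)
  | annM {M M'} (q) : TStepN M M' → TStepN (.ann q M) (.ann q M')
  | inspC {ϑ} (i : Fin 9) {M'} : TStepN (ϑ i) M' →
      TStepN (.insp ϑ) (.insp (Function.update ϑ i M'))

end CAU

/-! ## CAU⁻σ syntax: explicit substitutions and explicit trail projections -/

namespace CAU

mutual
  /-- Terms of CAU⁻σ. -/
  inductive Tm : Type
    | one : Tm                               -- de Bruijn index 1
    | lam : Tm → Tm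
    | ap : Tm → Tm → Tm
    | lets : Tm → Tm → Tm
    | bang : Tr → Tm → Tm
    | ann : Tr → Tm → Tm                     -- q ▷ M
    | insp : (Fin 9 → Tm) → Tm               -- ι(ϑ)
    | sub : Tm → Sb → Tm                     -- closure M[s]
    | er : Tm → Tm                           -- explicit trail erasure ⌊M⌋
  /-- Trails of CAU⁻σ. -/
  inductive Tr : Type
    | r : Tr
    | t : Tr → Tr → Tr
    | pb : Tr                                -- β
    | pbb : Tr                               -- β!
    | ti : Tr
    | lam : Tr → Tr
    | ap : Tr → Tr → Tr
    | lets : Tr → Tr → Tr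
    | tb : (Fin 9 → Tr) → Tr
    | ext : Tm → Tr                          -- explicit trail extraction ⌈M⌉
  /-- Explicit substitutions of CAU⁻σ. -/
  inductive Sb : Type
    | id : Sb                                -- ⟨⟩
    | sh : Sb                                -- ↑
    | cons : Tm → Sb → Sb                    -- M · s
    | comp : Sb → Sb → Sb                    -- s ∘ t
end

instance : Inhabited Tm := ⟨Tm.one⟩
instance : Inhabited Tr := ⟨Tr.r⟩
instance : Inhabited Sb := ⟨Sb.id⟩

/-- `pow n` is the iterated lift `↑^(n+1)`. -/
def pow : ℕ → Sb
  | 0 => .sh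
  | n + 1 => .comp .sh (pow n)

mutual
  /-- σ∪τ one-step reduction on CAU⁻σ terms (closed under arbitrary contexts). -/
  inductive StepT : Tm → Tm → Prop
    -- σ-rules for explicit substitutions
    | subOneId : StepT (.sub .one .id) .one
    | subOneCons (M s) : StepT (.sub .one (.cons M s)) M
    | subLam (M s) : StepT (.sub (.lam M) s) (.lam (.sub M (.cons .one (.comp s .sh))))
    | subAp (M N s) : StepT (.sub (.ap M N) s) (.ap (.sub M s) (.sub N s))
    | subBang (q M s) : StepT (.sub (.bang q M) s) (.bang q (.sub M s))
    | subLets (M N s) :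
        StepT (.sub (.lets M N) s) (.lets (.sub M s) (.sub N (.cons .one (.comp s .sh))))
    | subAnn (q M s) : StepT (.sub (.ann q M) s) (.ann q (.sub M s))
    | subInsp (ϑ s) : StepT (.sub (.insp ϑ) s) (.insp fun i => .sub (ϑ i) s)
    | subSub (M s t) : StepT (.sub (.sub M s) t) (.sub M (.comp s t))
    -- σ-rules for explicit trail erasure
    | erOne : StepT (.er .one) .one
    | erOneSh (n) : StepT (.er (.sub .one (pow n))) (.sub .one (pow n))
    | erLam (M) : StepT (.er (.lam M)) (.lam (.er M))
    | erAp (M N) : StepT (.er (.ap M N)) (.ap (.er M) (.er N))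
    | erBang (q M) : StepT (.er (.bang q M)) (.bang q M)
    | erLets (M N) : StepT (.er (.lets M N)) (.lets (.er M) (.er N))
    | erAnn (q M) : StepT (.er (.ann q M)) (.er M)
    | erInsp (ϑ) : StepT (.er (.insp ϑ)) (.insp fun i => .er (ϑ i))
    -- τ-rules on terms
    | annRefl (M) : StepT (.ann .r M) M
    | annAnn (q q' M) : StepT (.ann q (.ann q' M)) (.ann (.t q q') M)
    | bangAnn (q q' M) : StepT (.bang q (.ann q' M)) (.bang (.t q q') M)
    | lamAnn (q M) : StepT (.lam (.ann q M)) (.ann (.lam q) (.lam M))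
    | apAnnL (q M N) : StepT (.ap (.ann q M) N) (.ann (.ap q .r) (.ap M N))
    | apAnnR (q M N) : StepT (.ap M (.ann q N)) (.ann (.ap .r q) (.ap M N))
    | letsAnnL (q M N) : StepT (.lets (.ann q M) N) (.ann (.lets q .r) (.lets M N))
    | letsAnnR (q M N) : StepT (.lets M (.ann q N)) (.ann (.lets .r q) (.lets M N))
    | inspAnn (ϑ : Fin 9 → Tm) (i : Fin 9) (q M) : ϑ i = .ann q M →
        StepT (.insp ϑ)
          (.ann (.tb (Function.update (fun _ => Tr.r) i q)) (.insp (Function.update ϑ i M)))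
    -- congruence closure
    | lamC {M M'} : StepT M M' → StepT (.lam M) (.lam M')
    | apL {M M'} (N) : StepT M M' → StepT (.ap M N) (.ap M' N)
    | apR {N N'} (M) : StepT N N' → StepT (.ap M N) (.ap M N')
    | letsL {M M'} (N) : StepT M M' → StepT (.lets M N) (.lets M' N)
    | letsR {N N'} (M) : StepT N N' → StepT (.lets M N) (.lets M N')
    | bangQ {q q'} (M) : StepQ q q' → StepT (.bang q M) (.bang q' M)
    | bangM {M M'} (q) : StepT M M' → StepT (.bang q M) (.bang q M')
    | annQ {q q'} (M) : StepQ q q' → StepT (.ann q M) (.ann q' M)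
    | annM {M M'} (q) : StepT M M' → StepT (.ann q M) (.ann q M')
    | inspC {ϑ} (i : Fin 9) {M'} : StepT (ϑ i) M' →
        StepT (.insp ϑ) (.insp (Function.update ϑ i M'))
    | subM {M M'} (s) : StepT M M' → StepT (.sub M s) (.sub M' s)
    | subS {s s'} (M) : StepS s s' → StepT (.sub M s) (.sub M s')
    | erC {M M'} : StepT M M' → StepT (.er M) (.er M')
  /-- σ∪τ one-step reduction on CAU⁻σ trails. -/
  inductive StepQ : Tr → Tr → Prop
    -- σ-rules for explicit trail extraction
    | extOne : StepQ (.ext .one) .r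
    | extOneSh (n) : StepQ (.ext (.sub .one (pow n))) .r
    | extLam (M) : StepQ (.ext (.lam M)) (.lam (.ext M))
    | extAp (M N) : StepQ (.ext (.ap M N)) (.ap (.ext M) (.ext N))
    | extBang (q M) : StepQ (.ext (.bang q M)) .r
    | extLets (M N) : StepQ (.ext (.lets M N)) (.lets (.ext M) (.ext N))
    | extAnn (q M) : StepQ (.ext (.ann q M)) (.t q (.ext M))
    | extInsp (ϑ) : StepQ (.ext (.insp ϑ)) (.tb fun i => .ext (ϑ i))
    -- τ-rules on trails
    | tReflR (q) : StepQ (.t q .r) q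
    | tReflL (q) : StepQ (.t .r q) q
    | tbRefl : StepQ (.tb fun _ => .r) .r
    | apRefl : StepQ (.ap .r .r) .r
    | lamRefl : StepQ (.lam .r) .r
    | letsRefl : StepQ (.lets .r .r) .r
    | tAssoc (q₁ q₂ q₃) : StepQ (.t (.t q₁ q₂) q₃) (.t q₁ (.t q₂ q₃))
    | tLam (q q') : StepQ (.t (.lam q) (.lam q')) (.lam (.t q q'))
    | tLamT (q₁ q₁' q) :
        StepQ (.t (.lam q₁) (.t (.lam q₁') q)) (.t (.lam (.t q₁ q₁')) q)
    | tAp (q₁ q₂ q₁' q₂') :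
        StepQ (.t (.ap q₁ q₂) (.ap q₁' q₂')) (.ap (.t q₁ q₁') (.t q₂ q₂'))
    | tApT (q₁ q₂ q₁' q₂' q) :
        StepQ (.t (.ap q₁ q₂) (.t (.ap q₁' q₂') q)) (.t (.ap (.t q₁ q₁') (.t q₂ q₂')) q)
    | tLets (q₁ q₂ q₁' q₂') :
        StepQ (.t (.lets q₁ q₂) (.lets q₁' q₂')) (.lets (.t q₁ q₁') (.t q₂ q₂'))
    | tLetsT (q₁ q₂ q₁' q₂' q) :
        StepQ (.t (.lets q₁ q₂) (.t (.lets q₁' q₂') q)) (.t (.lets (.t q₁ q₁') (.t q₂ q₂')) q)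
    | tTb (ζ₁ ζ₂) : StepQ (.t (.tb ζ₁) (.tb ζ₂)) (.tb fun i => .t (ζ₁ i) (ζ₂ i))
    | tTbT (ζ₁ ζ₂ q) :
        StepQ (.t (.tb ζ₁) (.t (.tb ζ₂) q)) (.t (.tb fun i => .t (ζ₁ i) (ζ₂ i)) q)
    -- congruence closure
    | tL {q q''} (q') : StepQ q q'' → StepQ (.t q q') (.t q'' q')
    | tR {q' q''} (q) : StepQ q' q'' → StepQ (.t q q') (.t q q'')
    | lamC {q q'} : StepQ q q' → StepQ (.lam q) (.lam q')
    | apL {q q''} (q') : StepQ q q'' → StepQ (.ap q q') (.ap q'' q')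
    | apR {q' q''} (q) : StepQ q' q'' → StepQ (.ap q q') (.ap q q'')
    | letsL {q q''} (q') : StepQ q q'' → StepQ (.lets q q') (.lets q'' q')
    | letsR {q' q''} (q) : StepQ q' q'' → StepQ (.lets q q') (.lets q q'')
    | tbC {ζ} (i : Fin 9) {q'} : StepQ (ζ i) q' → StepQ (.tb ζ) (.tb (Function.update ζ i q'))
    | extC {M M'} : StepT M M' → StepQ (.ext M) (.ext M')
  /-- σ one-step reduction on CAU⁻σ substitutions. -/
  inductive StepS : Sb → Sb → Prop
    | idComp (s) : StepS (.comp .id s) s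
    | shId : StepS (.comp .sh .id) .sh
    | shCons (M s) : StepS (.comp .sh (.cons M s)) s
    | consComp (M s t) : StepS (.comp (.cons M s) t) (.cons (.sub M t) (.comp s t))
    | compAssoc (s₁ s₂ s₃) : StepS (.comp (.comp s₁ s₂) s₃) (.comp s₁ (.comp s₂ s₃))
    | consM {M M'} (s) : StepT M M' → StepS (.cons M s) (.cons M' s)
    | consS {s s'} (M) : StepS s s' → StepS (.cons M s) (.cons M s')
    | compL {s s''} (t) : StepS s s'' → StepS (.comp s t) (.comp s'' t)
    | compR {t t'} (s) : StepS t t' → StepS (.comp s t) (.comp s t')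
end

/-- στ-normal terms. -/
def NormalT (M : Tm) : Prop := ∀ N, ¬ StepT M N
/-- στ-normal trails. -/
def NormalQ (q : Tr) : Prop := ∀ q', ¬ StepQ q q'
/-- σ-normal substitutions. -/
def NormalS (s : Sb) : Prop := ∀ t, ¬ StepS s t

/-- `nf` is a στ-normal-form function for terms. -/
def IsNFT (nf : Tm → Tm) : Prop :=
  ∀ M, Relation.ReflTransGen StepT M (nf M) ∧ NormalT (nf M)
/-- `nfq` is a στ-normal-form function for trails. -/
def IsNFQ (nfq : Tr → Tr) : Prop :=
  ∀ q, Relation.ReflTransGen StepQ q (nfq q) ∧ NormalQ (nfq q)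
/-- `nfs` is a σ-normal-form function for substitutions. -/
def IsNFS (nfs : Sb → Sb) : Prop :=
  ∀ s, Relation.ReflTransGen StepS s (nfs s) ∧ NormalS (nfs s)

end CAU
namespace CAU

/-! ## Grammar of στ-normal forms -/

mutual
  /-- Grammar of στ-normal CAU⁻σ terms. -/
  inductive GTm : Tm → Prop
    | one : GTm .one
    | oneSh (n) : GTm (.sub .one (pow n))
    | lam {M} : GTm M → GTm (.lam M)
    | ap {M N} : GTm M → GTm N → GTm (.ap M N)
    | lets {M N} : GTm M → GTm N → GTm (.lets M N)
    | bang {q M} : GTr q → GTm M → GTm (.bang q M)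
    | ann {q M} : GTr q → GTm M → GTm (.ann q M)
    | insp {ϑ} : (∀ i, GTm (ϑ i)) → GTm (.insp ϑ)
  /-- Grammar of στ-normal CAU⁻σ trails. -/
  inductive GTr : Tr → Prop
    | r : GTr .r
    | t {q q'} : GTr q → GTr q' → GTr (.t q q')
    | pb : GTr .pb
    | pbb : GTr .pbb
    | ti : GTr .ti
    | lam {q} : GTr q → GTr (.lam q)
    | ap {q q'} : GTr q → GTr q' → GTr (.ap q q')
    | lets {q q'} : GTr q → GTr q' → GTr (.lets q q')
    | tb {ζ} : (∀ i, GTr (ζ i)) → GTr (.tb ζ)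
end

/-- Grammar of σ-normal CAU⁻σ substitutions. -/
inductive GSb : Sb → Prop
  | id : GSb .id
  | shn (n) : GSb (pow n)
  | cons {M s} : GTm M → GSb s → GSb (.cons M s)

/-! ## Focused forms and meta-level projections -/

/-- Meta-level trail erasure ⌊M⌋*, relative to a normal form function. -/
def metaErase (nf : Tm → Tm) (M : Tm) : Tm :=
  match nf M with
  | .ann _ M' => M'
  | N => N

/-- Meta-level trail extraction ⌈M⌉*, relative to a normal form function. -/
def metaExt (nf : Tm → Tm) (M : Tm) : Tr :=
  match nf M with
  | .ann q _ => q
  | _ => .r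

/-- The focused form ⟨M⟩ = ⌈M⌉* ▷ ⌊M⌋*. -/
def focusT (nf : Tm → Tm) (M : Tm) : Tm := .ann (metaExt nf M) (metaErase nf M)

/-- Focusing a σ-normal substitution pointwise. -/
def focusSb (nf : Tm → Tm) : Sb → Sb
  | .cons M s => .cons (focusT nf M) (focusSb nf s)
  | s => s

end CAU
namespace CAU

/-! ## Embedding pure (σ-normal) terms into CAU⁻σ -/

/-- Embedding of pure trails. -/
def toTr : NTr → Tr
  | .r => .r
  | .t q q' => .t (toTr q) (toTr q')
  | .pb => .pb
  | .pbb => .pbb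
  | .ti => .ti
  | .lam q => .lam (toTr q)
  | .ap q q' => .ap (toTr q) (toTr q')
  | .lets q q' => .lets (toTr q) (toTr q')
  | .tb ζ => .tb fun i => toTr (ζ i)

/-- Embedding of pure terms: de Bruijn index `var n` (0-based) becomes `1[↑ⁿ]`. -/
def toTm : NTm → Tm
  | .var 0 => .one
  | .var (n+1) => .sub .one (pow n)
  | .lam M => .lam (toTm M)
  | .ap M N => .ap (toTm M) (toTm N)
  | .lets M N => .lets (toTm M) (toTm N)
  | .bang q M => .bang (toTr q) (toTm M)
  | .ann q M => .ann (toTr q) (toTm M)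
  | .insp ϑ => .insp fun i => toTm (ϑ i)

/-- `shiftP p` is the substitution `↑ᵖ` (with `↑⁰ = ⟨⟩`). -/
def shiftP : ℕ → Sb
  | 0 => .id
  | n + 1 => pow n

/-- The substitution `N₁ · … · N_k · ↑ᵖ`. -/
def mkSub : List Tm → ℕ → Sb
  | [], p => shiftP p
  | M :: l, p => .cons M (mkSub l p)

/-! ## Meta-level substitution on pure terms -/

/-- Lift by one all free indices ≥ d. -/
def liftN (d : ℕ) : NTm → NTm
  | .var n => if n < d then .var n else .var (n + 1)
  | .lam M => .lam (liftN (d+1) M)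
  | .ap M N => .ap (liftN d M) (liftN d N)
  | .lets M N => .lets (liftN d M) (liftN d (N))
  | .bang q M => .bang q (liftN d M)
  | .ann q M => .ann q (liftN d M)
  | .insp ϑ => .insp fun i => liftN d (ϑ i)

/-- Meta-level simultaneous substitution `M{N⃗}ₚ` on pure terms. -/
def msubst : NTm → ℕ → List NTm → NTm
  | .var n, p, l => if h : n < l.length then l.get ⟨n, h⟩ else .var (n - l.length + p)
  | .lam M, p, l => .lam (msubst M (p+1) (.var 0 :: l.map (liftN 0)))
  | .ap M N, p, l => .ap (msubst M p l) (msubst N p l)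
  | .lets M N, p, l => .lets (msubst M p l) (msubst N (p+1) (.var 0 :: l.map (liftN 0)))
  | .bang q M, p, l => .bang q (msubst M p l)
  | .ann q M, p, l => .ann q (msubst M p l)
  | .insp ϑ, p, l => .insp fun i => msubst (ϑ i) p l

/-! ## Trail inspection: structural recursion qϑ over trails -/

/-- Structural recursion `qϑ` over a pure trail, applying the nine inspection branches. -/
def recTrailN : NTr → (Fin 9 → NTm) → NTm
  | .r, ϑ => ϑ 0
  | .t q q', ϑ => .ap (.ap (ϑ 1) (recTrailN q ϑ)) (recTrailN q' ϑ)
  | .pb, ϑ => ϑ 2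
  | .pbb, ϑ => ϑ 3
  | .ti, ϑ => ϑ 4
  | .lam q, ϑ => .ap (ϑ 5) (recTrailN q ϑ)
  | .ap q q', ϑ => .ap (.ap (ϑ 6) (recTrailN q ϑ)) (recTrailN q' ϑ)
  | .lets q q', ϑ => .ap (.ap (ϑ 7) (recTrailN q ϑ)) (recTrailN q' ϑ)
  | .tb ζ, ϑ => (List.ofFn fun i => recTrailN (ζ i) ϑ).foldl .ap (ϑ 8)

/-- Structural recursion `qϑ` over a CAU⁻σ trail (junk value on explicit extractions,
which cannot occur in the στ-normal trails it is applied to). -/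
def recTrailT : Tr → (Fin 9 → Tm) → Tm
  | .r, ϑ => ϑ 0
  | .t q q', ϑ => .ap (.ap (ϑ 1) (recTrailT q ϑ)) (recTrailT q' ϑ)
  | .pb, ϑ => ϑ 2
  | .pbb, ϑ => ϑ 3
  | .ti, ϑ => ϑ 4
  | .lam q, ϑ => .ap (ϑ 5) (recTrailT q ϑ)
  | .ap q q', ϑ => .ap (.ap (ϑ 6) (recTrailT q ϑ)) (recTrailT q' ϑ)
  | .lets q q', ϑ => .ap (.ap (ϑ 7) (recTrailT q ϑ)) (recTrailT q' ϑ)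
  | .tb ζ, ϑ => (List.ofFn fun i => recTrailT (ζ i) ϑ).foldl .ap (ϑ 8)
  | .ext _, ϑ => ϑ 0

/-! ## Meta-level β-reduction on pure (σ-normal) terms -/

/-- One inspection step in a bang-free context of a pure term:
some `ι(ϑ)` not guarded by a bang is replaced by `ti ▷ qϑ`. -/
inductive FInspN (q : NTr) : NTm → NTm → Prop
  | insp (ϑ) : FInspN q (.insp ϑ) (.ann .ti (recTrailN q ϑ))
  | lam {M M'} : FInspN q M M' → FInspN q (.lam M) (.lam M')
  | apL {M M'} (N) : FInspN q M M' → FInspN q (.ap M N) (.ap M' N)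
  | apR {N N'} (M) : FInspN q N N' → FInspN q (.ap M N) (.ap M N')
  | letsL {M M'} (N) : FInspN q M M' → FInspN q (.lets M N) (.lets M' N)
  | letsR {N N'} (M) : FInspN q N N' → FInspN q (.lets M N) (.lets M N')
  | ann {M M'} (q') : FInspN q M M' → FInspN q (.ann q' M) (.ann q' M')
  | inspC {ϑ} (i : Fin 9) {M'} : FInspN q (ϑ i) M' →
      FInspN q (.insp ϑ) (.insp (Function.update ϑ i M'))

/-- Meta-level β-reduction on pure (σ-normal) terms, closed under σ-normal contexts. -/
inductive BetaN : NTm → NTm → Prop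
  | beta (M N) : BetaN (.ap (.lam M) N) (.ann .pb (msubst M 0 [N]))
  | betaBang (q M N) : BetaN (.lets (.bang q M) N) (.ann .pbb (msubst N 0 [.ann q M]))
  | insp {q M M'} : FInspN q M M' → BetaN (.bang q M) (.bang q M')
  | lam {M M'} : BetaN M M' → BetaN (.lam M) (.lam M')
  | apL {M M'} (N) : BetaN M M' → BetaN (.ap M N) (.ap M' N)
  | apR {N N'} (M) : BetaN N N' → BetaN (.ap M N) (.ap M N')
  | letsL {M M'} (N) : BetaN M M' → BetaN (.lets M N) (.lets M' N)
  | letsR {N N'} (M) : BetaN N N' → BetaN (.lets M N) (.lets M N')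
  | bang {M M'} (q) : BetaN M M' → BetaN (.bang q M) (.bang q M')
  | ann {M M'} (q) : BetaN M M' → BetaN (.ann q M) (.ann q M')
  | inspC {ϑ} (i : Fin 9) {M'} : BetaN (ϑ i) M' →
      BetaN (.insp ϑ) (.insp (Function.update ϑ i M'))

/-! ## Lazy Beta-reduction of CAU⁻σ -/

/-- One inspection step in a context whose hole is not inside a bang, a substitution,
or an erasure: some `ι(ϑ)` is replaced by `ti ▷ qϑ`. -/
inductive FInspT (q : Tr) : Tm → Tm → Prop
  | insp (ϑ) : FInspT q (.insp ϑ) (.ann .ti (recTrailT q ϑ))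
  | lam {M M'} : FInspT q M M' → FInspT q (.lam M) (.lam M')
  | apL {M M'} (N) : FInspT q M M' → FInspT q (.ap M N) (.ap M' N)
  | apR {N N'} (M) : FInspT q N N' → FInspT q (.ap M N) (.ap M N')
  | letsL {M M'} (N) : FInspT q M M' → FInspT q (.lets M N) (.lets M' N)
  | letsR {N N'} (M) : FInspT q N N' → FInspT q (.lets M N) (.lets M N')
  | ann {M M'} (q') : FInspT q M M' → FInspT q (.ann q' M) (.ann q' M')
  | inspC {ϑ} (i : Fin 9) {M'} : FInspT q (ϑ i) M' →
      FInspT q (.insp ϑ) (.insp (Function.update ϑ i M'))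

mutual
  /-- The lazy Beta-relation of CAU⁻σ (relative to a normal form function `nfq`
  for trails, used in the trail inspection rule), closed under evaluation contexts
  `E_σ` whose hole does not occur inside an erasure. -/
  inductive LBeta (nfq : Tr → Tr) : Tm → Tm → Prop
    | beta (M N) :
        LBeta nfq (.ap (.lam M) N)
          (.ann (.t (.ap (.lam (.ext M)) (.ext N)) .pb) (.sub (.er M) (.cons (.er N) .id)))
    | betaBang (q M N) :
        LBeta nfq (.lets (.bang q M) N)
          (.ann (.t (.lets .r (.ext N)) .pbb) (.sub (.er N) (.cons (.ann q M) .id)))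
    | insp {q M M'} : FInspT (nfq (.t q (.ext M))) M M' →
        LBeta nfq (.bang q M) (.bang q M')
    | lam {M M'} : LBeta nfq M M' → LBeta nfq (.lam M) (.lam M')
    | apL {M M'} (N) : LBeta nfq M M' → LBeta nfq (.ap M N) (.ap M' N)
    | apR {N N'} (M) : LBeta nfq N N' → LBeta nfq (.ap M N) (.ap M N')
    | letsL {M M'} (N) : LBeta nfq M M' → LBeta nfq (.lets M N) (.lets M' N)
    | letsR {N N'} (M) : LBeta nfq N N' → LBeta nfq (.lets M N) (.lets M N')
    | bang {M M'} (q) : LBeta nfq M M' → LBeta nfq (.bang q M) (.bang q M')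
    | ann {M M'} (q) : LBeta nfq M M' → LBeta nfq (.ann q M) (.ann q M')
    | inspC {ϑ} (i : Fin 9) {M'} : LBeta nfq (ϑ i) M' →
        LBeta nfq (.insp ϑ) (.insp (Function.update ϑ i M'))
    | subM {M M'} (s) : LBeta nfq M M' → LBeta nfq (.sub M s) (.sub M' s)
    | subS {s s'} (M) : LBetaSub nfq s s' → LBeta nfq (.sub M s) (.sub M s')
  /-- Lazy Beta-reduction inside substitutions. -/
  inductive LBetaSub (nfq : Tr → Tr) : Sb → Sb → Prop
    | consM {M M'} (s) : LBeta nfq M M' → LBetaSub nfq (.cons M s) (.cons M' s)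
    | consS {s s'} (M) : LBetaSub nfq s s' → LBetaSub nfq (.cons M s) (.cons M s')
    | compL {s s''} (t) : LBetaSub nfq s s'' → LBetaSub nfq (.comp s t) (.comp s'' t)
    | compR {t t'} (s) : LBetaSub nfq t t' → LBetaSub nfq (.comp s t) (.comp s t')
end

/-- CAU⁻σ reduction: the union of Beta-reduction and στ-equivalence. -/
def SRed (nfq : Tr → Tr) (M N : Tm) : Prop :=
  LBeta nfq M N ∨ Relation.EqvGen StepT M N

/-! ## Naive (eager) CAU⁻ reduction on στ-normal terms -/

/-- A principal contraction in the style of CAU⁻ (using an explicit substitution for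
the redex, to be normalized away immediately afterwards), closed under arbitrary
CAU⁻ contexts. -/
inductive NaiveBeta : Tm → Tm → Prop
  | beta (M N) : NaiveBeta (.ap (.lam M) N) (.ann .pb (.sub M (.cons N .id)))
  | betaBang (q M N) :
      NaiveBeta (.lets (.bang q M) N) (.ann .pbb (.sub N (.cons (.ann q M) .id)))
  | insp {q M M'} : FInspT q M M' → NaiveBeta (.bang q M) (.bang q M')
  | lam {M M'} : NaiveBeta M M' → NaiveBeta (.lam M) (.lam M')
  | apL {M M'} (N) : NaiveBeta M M' → NaiveBeta (.ap M N) (.ap M' N)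
  | apR {N N'} (M) : NaiveBeta N N' → NaiveBeta (.ap M N) (.ap M N')
  | letsL {M M'} (N) : NaiveBeta M M' → NaiveBeta (.lets M N) (.lets M' N)
  | letsR {N N'} (M) : NaiveBeta N N' → NaiveBeta (.lets M N) (.lets M N')
  | bang {M M'} (q) : NaiveBeta M M' → NaiveBeta (.bang q M) (.bang q M')
  | ann {M M'} (q) : NaiveBeta M M' → NaiveBeta (.ann q M) (.ann q M')
  | inspC {ϑ} (i : Fin 9) {M'} : NaiveBeta (ϑ i) M' →
      NaiveBeta (.insp ϑ) (.insp (Function.update ϑ i M'))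

/-- One step of CAU⁻ reduction: a principal contraction followed by normalization. -/
def CRed (nf : Tm → Tm) (M N : Tm) : Prop := ∃ R, NaiveBeta M R ∧ N = nf R

/-! ## The eager β̄-reduction on focused forms -/

/-- β̄-reduction: the relation on focused forms induced by meta-level β on pure terms. -/
def BbarT (nf : Tm → Tm) (A B : Tm) : Prop :=
  ∃ M N : NTm, BetaN M N ∧ A = focusT nf (toTm M) ∧ B = focusT nf (toTm N)

/-- Focusing of a σ-normal substitution `N⃗ · ↑ᵖ` given by a list of pure terms. -/
def focusNSub (nf : Tm → Tm) (l : List NTm) (p : ℕ) : Sb :=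
  mkSub (l.map fun M => focusT nf (toTm M)) p

/-- β̄-reduction on focused substitutions: one component β-reduces. -/
def BbarS (nf : Tm → Tm) (A B : Sb) : Prop :=
  ∃ (l : List NTm) (p : ℕ) (i : ℕ) (h : i < l.length) (N' : NTm),
    BetaN (l.get ⟨i, h⟩) N' ∧ A = focusNSub nf l p ∧ B = focusNSub nf (l.set i N') p

/-- One-hole σ-normal contexts over pure terms. -/
inductive NCtx : Type
  | hole : NCtx
  | lam : NCtx → NCtx
  | apL : NCtx → NTm → NCtx
  | apR : NTm → NCtx → NCtx
  | letsL : NCtx → NTm → NCtx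
  | letsR : NTm → NCtx → NCtx
  | bang : NTr → NCtx → NCtx
  | ann : NTr → NCtx → NCtx
  | insp : (Fin 9 → NTm) → Fin 9 → NCtx → NCtx

/-- Filling the hole of a σ-normal context. -/
def fillN : NCtx → NTm → NTm
  | .hole, X => X
  | .lam C, X => .lam (fillN C X)
  | .apL C N, X => .ap (fillN C X) N
  | .apR M C, X => .ap M (fillN C X)
  | .letsL C N, X => .lets (fillN C X) N
  | .letsR M C, X => .lets M (fillN C X)
  | .bang q C, X => .bang q (fillN C X)
  | .ann q C, X => .ann q (fillN C X)
  | .insp ϑ i C, X => .insp (Function.update ϑ i (fillN C X))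

end CAU
namespace CAU

/-! ## The call-by-value abstract machine -/

mutual
  /-- Machine closures. -/
  inductive Clo : Type
    | lamC : NTm → Env → Clo          -- ⌊(λM̂)[e]⌋
    | bangC : Tr → Clo → Clo          -- !_q C
  /-- Machine values `q ▷ C`. -/
  inductive Val : Type
    | mk : Tr → Clo → Val
  /-- Machine environments: lists of values. -/
  inductive Env : Type
    | nil : Env
    | cons : Val → Env → Env
end

instance : Inhabited Clo := ⟨.lamC (.var 0) .nil⟩
instance : Inhabited Val := ⟨.mk .r default⟩
instance : Inhabited Env := ⟨.nil⟩

/-- The trail of a value. -/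
def Val.tr : Val → Tr | .mk q _ => q
/-- The closure of a value. -/
def Val.clo : Val → Clo | .mk _ C => C

/-- Length of an environment. -/
def envLen : Env → ℕ
  | .nil => 0
  | .cons _ e => envLen e + 1

/-- Environment lookup `e(n)`, returning the n-th closure (0-based). -/
def lookupE : Env → ℕ → Option Clo
  | .cons (.mk _ C) _, 0 => some C
  | .cons _ e, n + 1 => lookupE e n
  | .nil, _ => none

mutual
  /-- The CAU⁻σ term denoted by a closure. -/
  def cloToTm : Clo → Tm
    | .lamC M e => .er (.sub (.lam (toTm M)) (envToSub e))
    | .bangC q C => .bang q (cloToTm C)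
  /-- The CAU⁻σ term denoted by a value. -/
  def valToTm : Val → Tm
    | .mk q C => .ann q (cloToTm C)
  /-- The explicit substitution denoted by an environment. -/
  def envToSub : Env → Sb
    | .nil => .id
    | .cons V e => .cons (valToTm V) (envToSub e)
end

/-- Pure terms closed below depth `d` (all free indices < d). -/
def closedN (d : ℕ) : NTm → Prop
  | .var n => n < d
  | .lam M => closedN (d+1) M
  | .ap M N => closedN d M ∧ closedN d N
  | .lets M N => closedN d M ∧ closedN (d+1) N
  | .bang _ M => closedN d M
  | .ann _ M => closedN d M
  | .insp ϑ => ∀ i, closedN d (ϑ i)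

mutual
  /-- Closed closures. -/
  def closedClo : Clo → Prop
    | .lamC M e => closedN (envLen e + 1) M ∧ closedEnv e
    | .bangC _ C => closedClo C
  /-- Closed values. -/
  def closedVal : Val → Prop
    | .mk _ C => closedClo C
  /-- Closed environments. -/
  def closedEnv : Env → Prop
    | .nil => True
    | .cons V e => closedVal V ∧ closedEnv e
end

/-- Machine codes: pure terms or fragments of abstract syntax tree. -/
inductive Code : Type
  | tm : NTm → Code
  | ap : Code
  | bg : Code
  | lt : NTm → Code
  | ins : Code

/-- Stack tuples `(q | κ | e)`. -/
structure Tup where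
  q : Tr
  κ : Code
  e : Env

instance : Inhabited Tup := ⟨⟨.r, .ap, .nil⟩⟩

/-- Stacks. -/
abbrev Stack := List Tup
/-- Dumps. -/
abbrev Dump := List Val
/-- Machine configurations. -/
abbrev Config := Stack × Dump

/-- The tuple for a pending inspection branch. -/
def brTup (x : Tr × NTm × Env) : Tup := ⟨x.1, .tm x.2.1, x.2.2⟩

mutual
  /-- Well-formed context configurations. -/
  inductive WfCtx : Stack → Dump → Prop
    | nil : WfCtx [] []
    | apTm {π D} (q q' M e) : WfCtx π D →
        WfCtx (⟨q, .tm M, e⟩ :: ⟨q', .ap, .nil⟩ :: π) D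
    | apVal {π D} (q V) : WfCtx π D → WfCtx (⟨q, .ap, .nil⟩ :: π) (V :: D)
    | lt {π D} (q M e) : WfCtx π D → WfCtx (⟨q, .lt M, e⟩ :: π) D
    | bg {π D} (q) : WfCtx π D → WfCtx (⟨q, .bg, .nil⟩ :: π) D
    | ins {π D} (q') (ts : List (Tr × NTm × Env)) (vs : List Val) :
        vs.length + ts.length = 8 → WfCtx π D →
        WfCtx (ts.map brTup ++ ⟨q', .ins, .nil⟩ :: π) (vs ++ D)
  /-- Well-formed term configurations. -/
  inductive WfTm : Stack → Dump → Prop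
    | fin (V) : WfTm [] [V]
    | tm {π D} (q M e) : WfCtx π D → WfTm (⟨q, .tm M, e⟩ :: π) D
    | ap {π D} (q V W) : WfCtx π D → WfTm (⟨q, .ap, .nil⟩ :: π) (W :: V :: D)
    | lt {π D} (q M e V) : WfCtx π D → WfTm (⟨q, .lt M, e⟩ :: π) (V :: D)
    | bg {π D} (q V) : WfCtx π D → WfTm (⟨q, .bg, .nil⟩ :: π) (V :: D)
    | ins {π D} (q) (vs : List Val) : vs.length = 9 → WfCtx π D →
        WfTm (⟨q, .ins, .nil⟩ :: π) (vs ++ D)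
end

/-- The term denoted by a pending-branch tuple. -/
def tupDen (x : Tr × NTm × Env) : Tm := .ann x.1 (.er (.sub (toTm x.2.1) (envToSub x.2.2)))

mutual
  /-- Denotation of context configurations as CAU⁻σ one-hole contexts. -/
  inductive CtxDen : Stack → Dump → (Tm → Tm) → Prop
    | nil : CtxDen [] [] id
    | apTm {π D E} (q q' M e) : CtxDen π D E →
        CtxDen (⟨q, .tm M, e⟩ :: ⟨q', .ap, .nil⟩ :: π) D
          (fun X => E (.ann q' (.ap X (.ann q (.er (.sub (toTm M) (envToSub e)))))))
    | apVal {π D E} (q V) : CtxDen π D E →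
        CtxDen (⟨q, .ap, .nil⟩ :: π) (V :: D) (fun X => E (.ann q (.ap (valToTm V) X)))
    | lt {π D E} (q N e) : CtxDen π D E →
        CtxDen (⟨q, .lt N, e⟩ :: π) D
          (fun X => E (.ann q (.lets X
            (.er (.sub (toTm N) (.cons .one (.comp (envToSub e) .sh)))))))
    | bg {π D E} (q) : CtxDen π D E →
        CtxDen (⟨q, .bg, .nil⟩ :: π) D (fun X => E (.ann q (.bang .r X)))
    | ins {π D E} (q') (ts : List (Tr × NTm × Env)) (vs : List Val) :
        vs.length + ts.length = 8 → CtxDen π D E →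
        CtxDen (ts.map brTup ++ ⟨q', .ins, .nil⟩ :: π) (vs ++ D)
          (fun X => E (.ann q' (.insp fun i =>
            if h : (i : ℕ) < vs.length then valToTm (vs.get ⟨i, h⟩)
            else if (i : ℕ) = vs.length then X
            else tupDen (ts.getD ((i : ℕ) - vs.length - 1) default))))
  /-- Denotation of term configurations as CAU⁻σ terms. -/
  inductive TmDen : Stack → Dump → Tm → Prop
    | fin (V) : TmDen [] [V] (valToTm V)
    | tm {π D E} (q M e) : CtxDen π D E →
        TmDen (⟨q, .tm M, e⟩ :: π) D (E (.ann q (.er (.sub (toTm M) (envToSub e)))))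
    | ap {π D E} (q V W) : CtxDen π D E →
        TmDen (⟨q, .ap, .nil⟩ :: π) (W :: V :: D) (E (.ann q (.ap (valToTm V) (valToTm W))))
    | lt {π D E} (q N e V) : CtxDen π D E →
        TmDen (⟨q, .lt N, e⟩ :: π) (V :: D)
          (E (.ann q (.lets (valToTm V)
            (.er (.sub (toTm N) (.cons .one (.comp (envToSub e) .sh)))))))
    | bg {π D E} (q V) : CtxDen π D E →
        TmDen (⟨q, .bg, .nil⟩ :: π) (V :: D) (E (.ann q (.bang .r (valToTm V))))
    | ins {π D E} (q) (vs : List Val) : vs.length = 9 → CtxDen π D E →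
        TmDen (⟨q, .ins, .nil⟩ :: π) (vs ++ D)
          (E (.ann q (.insp fun i => valToTm (vs.getD (i : ℕ) default))))
end

/-- The trail-collection operator `I(q_ϑ, π, D)` materializing the trail of the
enclosing bang for trail inspection. -/
inductive IRel (nfq : Tr → Tr) : Tr → Stack → Dump → Tr → Prop
  | bg {qθ π D} (q') : IRel nfq qθ (⟨q', .bg, .nil⟩ :: π) D (nfq qθ)
  | apTm {qθ π D res} (q q' M e) :
      IRel nfq (.t q' (.ap qθ q)) π D res →
      IRel nfq qθ (⟨q, .tm M, e⟩ :: ⟨q', .ap, .nil⟩ :: π) D res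
  | apVal {qθ π D res} (q q'' C) :
      IRel nfq (.t q (.ap q'' qθ)) π D res →
      IRel nfq qθ (⟨q, .ap, .nil⟩ :: π) (Val.mk q'' C :: D) res
  | lt {qθ π D res} (q N e) :
      IRel nfq (.t q (.lets qθ .r)) π D res →
      IRel nfq qθ (⟨q, .lt N, e⟩ :: π) D res
  | ins {qθ π D res} (q') (ts : List (Tr × NTm × Env)) (vs : List Val) :
      vs.length + ts.length = 8 →
      IRel nfq (.t q' (.tb fun i =>
          if h : (i : ℕ) < vs.length then (vs.get ⟨i, h⟩).tr
          else if (i : ℕ) = vs.length then qθ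
          else (ts.getD ((i : ℕ) - vs.length - 1) default).1)) π D res →
      IRel nfq qθ (ts.map brTup ++ ⟨q', .ins, .nil⟩ :: π) (vs ++ D) res

/-- The inspection trail of nine evaluated branches, as a term (de Bruijn encoding of
trail constructors as the dangling indices 1..9). -/
def tTT : Tr → NTm
  | .r => .var 0
  | .t q q' => .ap (.ap (.var 1) (tTT q)) (tTT q')
  | .pb => .var 2
  | .pbb => .var 3
  | .ti => .var 4
  | .lam q => .ap (.var 5) (tTT q)
  | .ap q q' => .ap (.ap (.var 6) (tTT q)) (tTT q')
  | .lets q q' => .ap (.ap (.var 7) (tTT q)) (tTT q')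
  | .tb ζ => (List.ofFn fun i => tTT (ζ i)).foldl .ap (.var 8)
  | .ext _ => .var 0

/-- The environment `[r ▷ C₁, …, r ▷ C₉]` of inspection branches. -/
def mkEnv (vs : List Val) : Env := vs.foldr (fun V e => .cons (.mk .r V.clo) e) .nil

/-- Transition relation of the call-by-value abstract machine. -/
inductive MStep (nfq : Tr → Tr) : Config → Config → Prop
  | r1 {π D} (q M N e) :
      MStep nfq (⟨q, .tm (.ap M N), e⟩ :: π, D)
        (⟨.r, .tm M, e⟩ :: ⟨.r, .tm N, e⟩ :: ⟨q, .ap, .nil⟩ :: π, D)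
  | r2 {π D} (q q' C q'' M e) :
      MStep nfq (⟨q, .ap, .nil⟩ :: π, Val.mk q' C :: Val.mk q'' (.lamC M e) :: D)
        (⟨.t q (.t (.ap q'' q') .pb), .tm M, .cons (.mk .r C) e⟩ :: π, D)
  | r3 {π D} (q M e) :
      MStep nfq (⟨q, .tm (.lam M), e⟩ :: π, D) (π, Val.mk q (.lamC M e) :: D)
  | r4 {π D} (q M N e) :
      MStep nfq (⟨q, .tm (.lets M N), e⟩ :: π, D)
        (⟨.r, .tm M, e⟩ :: ⟨q, .lt N, e⟩ :: π, D)
  | r5 {π D} (q N e q' V) :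
      MStep nfq (⟨q, .lt N, e⟩ :: π, Val.mk q' (.bangC V.tr V.clo) :: D)
        (⟨.t q (.t (.lets q' .r) (.t .pbb
            (.ext (.sub (.er (.sub (toTm N) (.cons .one (.comp (envToSub e) .sh))))
              (.cons (valToTm V) .id))))),
          .tm N, .cons V e⟩ :: π, D)
  | r6 {π D} (q q' M e) :
      MStep nfq (⟨q, .tm (.bang q' M), e⟩ :: π, D)
        (⟨.t (toTr q') (.ext (.sub (toTm M) (envToSub e))), .tm M, e⟩ :: ⟨q, .bg, .nil⟩ :: π, D)
  | r7 {π D} (q V) :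
      MStep nfq (⟨q, .bg, .nil⟩ :: π, V :: D) (π, Val.mk q (.bangC V.tr V.clo) :: D)
  | r8 {π D} (q ϑ e) :
      MStep nfq (⟨q, .tm (.insp ϑ), e⟩ :: π, D)
        ((List.ofFn fun i : Fin 9 => Tup.mk .r (.tm (ϑ i)) e) ++ ⟨q, .ins, .nil⟩ :: π, D)
  | r9 {π D} (q) (vs : List Val) (qres : Tr) :
      vs.length = 9 →
      IRel nfq (.t q (.tb fun i => (vs.getD (i : ℕ) default).tr)) π D qres →
      MStep nfq (⟨q, .ins, .nil⟩ :: π, vs ++ D)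
        (⟨.t q (.t (.tb fun i => (vs.getD (i : ℕ) default).tr) .ti),
          .tm (tTT qres), mkEnv vs⟩ :: π, D)
  | r10 {π D} (q n e C) :
      lookupE e n = some C →
      MStep nfq (⟨q, .tm (.var n), e⟩ :: π, D) (π, Val.mk q C :: D)

/-- Closedness conditions on stack tuples. -/
def TupClosed : Tup → Prop
  | ⟨_, .tm M, e⟩ => closedN (envLen e) M ∧ closedEnv e
  | ⟨_, .lt N, e⟩ => closedN (envLen e + 1) N ∧ closedEnv e
  | ⟨_, _, e⟩ => closedEnv e

/-- Valid machine states: well-formed term configurations whose tuples and dump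
values are closed. -/
def Valid (ς : Config) : Prop :=
  WfTm ς.1 ς.2 ∧ (∀ t ∈ ς.1, TupClosed t) ∧ (∀ V ∈ ς.2, closedVal V)

end CAU

namespace CAU

/-! ### Auxiliary development for the admissible beta rule -/

abbrev ETm := Relation.EqvGen StepT
abbrev ETr := Relation.EqvGen StepQ
abbrev ESb := Relation.EqvGen StepS

theorem EqvGen.mono' {α β} {R : α → α → Prop} {S : β → β → Prop} {f : α → β}
    (h : ∀ a b, R a b → S (f a) (f b)) :
    ∀ {a b}, Relation.EqvGen R a b → Relation.EqvGen S (f a) (f b) := by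
  intro a b hab
  induction hab with
  | rel a b hr => exact .rel _ _ (h _ _ hr)
  | refl a => exact .refl _
  | symm a b _ ih => exact .symm _ _ ih
  | trans a b c _ _ ih1 ih2 => exact .trans _ _ _ ih1 ih2

-- term congruences
theorem cLam {a b} (h : ETm a b) : ETm (.lam a) (.lam b) :=
  EqvGen.mono' (fun _ _ h => StepT.lamC h) h
theorem cApL (N) {a b} (h : ETm a b) : ETm (.ap a N) (.ap b N) :=
  EqvGen.mono' (fun _ _ h => StepT.apL N h) h
theorem cApR (M) {a b} (h : ETm a b) : ETm (.ap M a) (.ap M b) :=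
  EqvGen.mono' (fun _ _ h => StepT.apR M h) h
theorem cLetsL (N) {a b} (h : ETm a b) : ETm (.lets a N) (.lets b N) :=
  EqvGen.mono' (fun _ _ h => StepT.letsL N h) h
theorem cLetsR (M) {a b} (h : ETm a b) : ETm (.lets M a) (.lets M b) :=
  EqvGen.mono' (fun _ _ h => StepT.letsR M h) h
theorem cBang (q) {a b} (h : ETm a b) : ETm (.bang q a) (.bang q b) :=
  EqvGen.mono' (fun _ _ h => StepT.bangM q h) h
theorem cAnn (q) {a b} (h : ETm a b) : ETm (.ann q a) (.ann q b) :=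
  EqvGen.mono' (fun _ _ h => StepT.annM q h) h
theorem cAnnQ (M) {a b} (h : ETr a b) : ETm (.ann a M) (.ann b M) :=
  EqvGen.mono' (fun _ _ h => StepT.annQ M h) h
theorem cEr {a b} (h : ETm a b) : ETm (.er a) (.er b) :=
  EqvGen.mono' (fun _ _ h => StepT.erC h) h
theorem cSubM (s) {a b} (h : ETm a b) : ETm (.sub a s) (.sub b s) :=
  EqvGen.mono' (fun _ _ h => StepT.subM s h) h
theorem cSubS (M) {a b} (h : ESb a b) : ETm (.sub M a) (.sub M b) :=
  EqvGen.mono' (fun _ _ h => StepT.subS M h) h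
-- substitution congruences
theorem cConsM (s) {a b} (h : ETm a b) : ESb (.cons a s) (.cons b s) :=
  EqvGen.mono' (fun _ _ h => StepS.consM s h) h
theorem cConsS (M) {a b} (h : ESb a b) : ESb (.cons M a) (.cons M b) :=
  EqvGen.mono' (fun _ _ h => StepS.consS M h) h
theorem cCompL (t) {a b} (h : ESb a b) : ESb (.comp a t) (.comp b t) :=
  EqvGen.mono' (fun _ _ h => StepS.compL t h) h
theorem cCompR (s) {a b} (h : ESb a b) : ESb (.comp s a) (.comp s b) :=
  EqvGen.mono' (fun _ _ h => StepS.compR s h) h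
-- trail congruences
theorem cQTL (q') {a b} (h : ETr a b) : ETr (.t a q') (.t b q') :=
  EqvGen.mono' (fun _ _ h => StepQ.tL q' h) h
theorem cQTR (q) {a b} (h : ETr a b) : ETr (.t q a) (.t q b) :=
  EqvGen.mono' (fun _ _ h => StepQ.tR q h) h
theorem cQLam {a b} (h : ETr a b) : ETr (.lam a) (.lam b) :=
  EqvGen.mono' (fun _ _ h => StepQ.lamC h) h
theorem cQApL (q') {a b} (h : ETr a b) : ETr (.ap a q') (.ap b q') :=
  EqvGen.mono' (fun _ _ h => StepQ.apL q' h) h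
theorem cQApR (q) {a b} (h : ETr a b) : ETr (.ap q a) (.ap q b) :=
  EqvGen.mono' (fun _ _ h => StepQ.apR q h) h
theorem cExt {a b} (h : ETm a b) : ETr (.ext a) (.ext b) :=
  EqvGen.mono' (fun _ _ h => StepQ.extC h) h
theorem cQLetsL (q') {a b} (h : ETr a b) : ETr (.lets a q') (.lets b q') :=
  EqvGen.mono' (fun _ _ h => StepQ.letsL q' h) h
theorem cQLetsR (q) {a b} (h : ETr a b) : ETr (.lets q a) (.lets q b) :=
  EqvGen.mono' (fun _ _ h => StepQ.letsR q h) h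

/-- One-coordinate congruence for `Fin 9`-indexed containers. -/
theorem oneCoord {α β} {R : α → α → Prop} {S : β → β → Prop} (mk : (Fin 9 → α) → β)
    (cong : ∀ (ζ : Fin 9 → α) (i : Fin 9) (x : α), R (ζ i) x →
      S (mk ζ) (mk (Function.update ζ i x)))
    (i : Fin 9) {x y : α} (h : Relation.EqvGen R x y) :
    ∀ (ζ : Fin 9 → α), ζ i = x → Relation.EqvGen S (mk ζ) (mk (Function.update ζ i y)) := by
  induction h with
  | rel a b hr =>
    intro ζ hz
    exact .rel _ _ (cong ζ i b (hz ▸ hr))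
  | refl a =>
    intro ζ hz
    rw [← hz, Function.update_eq_self]
    exact .refl _
  | symm a b _ ih =>
    intro ζ hz
    have h1 := ih (Function.update ζ i a) (Function.update_self ..)
    rw [Function.update_idem, ← hz, Function.update_eq_self] at h1
    exact .symm _ _ h1
  | trans a b c _ _ ih1 ih2 =>
    intro ζ hz
    have h1 := ih1 ζ hz
    have h2 := ih2 (Function.update ζ i b) (Function.update_self ..)
    rw [Function.update_idem] at h2
    exact .trans _ _ _ h1 h2

theorem chainHelper {α β} {R : α → α → Prop} {S : β → β → Prop} (mk : (Fin 9 → α) → β)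
    (cong : ∀ (ζ : Fin 9 → α) (i : Fin 9) (x : α), R (ζ i) x →
      S (mk ζ) (mk (Function.update ζ i x))) :
    ∀ (l : List (Fin 9)) (ζ ζ' : Fin 9 → α),
      (∀ i, i ∈ l → Relation.EqvGen R (ζ i) (ζ' i)) →
      (∀ i, i ∉ l → ζ i = ζ' i) →
      Relation.EqvGen S (mk ζ) (mk ζ') := by
  intro l
  induction l with
  | nil =>
    intro ζ ζ' _ hout
    have : ζ = ζ' := funext fun i => hout i List.not_mem_nil
    rw [this]; exact .refl _
  | cons a l ih =>
    intro ζ ζ' hin hout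
    have h1 : Relation.EqvGen S (mk ζ) (mk (Function.update ζ a (ζ' a))) :=
      oneCoord mk cong a (hin a List.mem_cons_self) ζ rfl
    have h2 : Relation.EqvGen S (mk (Function.update ζ a (ζ' a))) (mk ζ') := by
      apply ih
      · intro i hi
        by_cases hia : i = a
        · subst hia; rw [Function.update_self]; exact .refl _
        · rw [Function.update_of_ne hia]
          exact hin i (List.mem_cons_of_mem a hi)
      · intro i hi
        by_cases hia : i = a
        · subst hia; rw [Function.update_self]
        · rw [Function.update_of_ne hia]
          exact hout i (by simp [hia, hi])
    exact .trans _ _ _ h1 h2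

theorem cInsp {ϑ ϑ' : Fin 9 → Tm} (h : ∀ i, ETm (ϑ i) (ϑ' i)) :
    ETm (.insp ϑ) (.insp ϑ') :=
  chainHelper Tm.insp (fun _ i _ hx => StepT.inspC i hx) (List.finRange 9) ϑ ϑ'
    (fun i _ => h i) (fun i hi => absurd (List.mem_finRange i) hi)

theorem cTb {ζ ζ' : Fin 9 → Tr} (h : ∀ i, ETr (ζ i) (ζ' i)) :
    ETr (.tb ζ) (.tb ζ') :=
  chainHelper Tr.tb (fun _ i _ hx => StepQ.tbC i hx) (List.finRange 9) ζ ζ'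
    (fun i _ => h i) (fun i hi => absurd (List.mem_finRange i) hi)

end CAU

namespace CAU

/-- Embedded de Bruijn variable. -/
abbrev vr (n : ℕ) : Tm := toTm (.var n)

theorem vr_zero : vr 0 = .one := rfl
theorem vr_succ (n : ℕ) : vr (n + 1) = .sub .one (pow n) := rfl

/-- Lift of an explicit substitution. -/
def liftS (s : Sb) : Sb := .cons .one (.comp s .sh)

def liftK : ℕ → Sb → Sb
  | 0, u => u
  | k + 1, u => liftS (liftK k u)

/-- `powC n w` denotes `↑ⁿ ∘ w`. -/
def powC : ℕ → Sb → Sb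
  | 0, w => w
  | n + 1, w => .comp (pow n) w

theorem powShift (j : ℕ) : ESb (.comp (pow j) .sh) (pow (j + 1)) := by
  induction j with
  | zero => exact .refl _
  | succ j ih =>
    exact .trans _ _ _ (.rel _ _ (StepS.compAssoc .sh (pow j) .sh)) (cCompR .sh ih)

theorem powId (a : ℕ) : ESb (.comp (pow a) .id) (pow a) := by
  induction a with
  | zero => exact .rel _ _ StepS.shId
  | succ a ih =>
    exact .trans _ _ _ (.rel _ _ (StepS.compAssoc .sh (pow a) .id)) (cCompR .sh ih)

theorem powPow (a b : ℕ) : ESb (.comp (pow a) (pow b)) (pow (a + b + 1)) := by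
  induction a with
  | zero => rw [Nat.zero_add]; exact .refl _
  | succ a ih =>
    have : a + 1 + b + 1 = (a + b + 1) + 1 := by omega
    rw [this]
    exact .trans _ _ _ (.rel _ _ (StepS.compAssoc .sh (pow a) (pow b))) (cCompR .sh ih)

theorem powCons' (n : ℕ) (A : Tm) (s : Sb) :
    ESb (.comp (pow (n + 1)) (.cons A s)) (.comp (pow n) s) := by
  induction n with
  | zero =>
    refine .trans _ _ _ (.rel _ _ (StepS.compAssoc .sh .sh (.cons A s))) ?_
    exact cCompR .sh (.rel _ _ (StepS.shCons A s))
  | succ n ih =>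
    refine .trans _ _ _ (.rel _ _ (StepS.compAssoc .sh (pow (n+1)) (.cons A s))) ?_
    refine .trans _ _ _ (cCompR .sh ih) ?_
    exact .symm _ _ (.rel _ _ (StepS.compAssoc .sh (pow n) s))

theorem shPowC (n : ℕ) (w : Sb) : ESb (.comp .sh (powC n w)) (powC (n + 1) w) := by
  cases n with
  | zero => exact .refl _
  | succ n => exact .symm _ _ (.rel _ _ (StepS.compAssoc .sh (pow n) w))

theorem compPowLift (n : ℕ) (w : Sb) :
    ESb (.comp (pow n) (liftS w)) (.comp (powC n w) .sh) := by
  induction n with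
  | zero => exact .rel _ _ (StepS.shCons .one (.comp w .sh))
  | succ n ih =>
    refine .trans _ _ _ (.rel _ _ (StepS.compAssoc .sh (pow n) (liftS w))) ?_
    refine .trans _ _ _ (cCompR .sh ih) ?_
    refine .trans _ _ _ (.symm _ _ (.rel _ _ (StepS.compAssoc .sh (powC n w) .sh))) ?_
    exact cCompL .sh (shPowC n w)

theorem subPowC (n : ℕ) (w : Sb) : ETm (.sub .one (powC n w)) (.sub (vr n) w) := by
  cases n with
  | zero => exact .refl _
  | succ n => exact .symm _ _ (.rel _ _ (StepT.subSub .one (pow n) w))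

theorem var_liftS (n : ℕ) (w : Sb) :
    ETm (.sub (vr (n + 1)) (liftS w)) (.sub (.sub (vr n) w) .sh) := by
  refine .trans _ _ _ (.rel _ _ (StepT.subSub .one (pow n) (liftS w))) ?_
  refine .trans _ _ _ (cSubS .one (compPowLift n w)) ?_
  refine .trans _ _ _ (.symm _ _ (.rel _ _ (StepT.subSub .one (powC n w) .sh))) ?_
  exact cSubM .sh (subPowC n w)

theorem var_shift (n : ℕ) : ETm (.sub (vr n) .sh) (vr (n + 1)) := by
  cases n with
  | zero => exact .refl _
  | succ n =>
    exact .trans _ _ _ (.rel _ _ (StepT.subSub .one (pow n) .sh)) (cSubS .one (powShift n))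

theorem var_id (n : ℕ) : ETm (.sub (vr n) .id) (vr n) := by
  cases n with
  | zero => exact .rel _ _ StepT.subOneId
  | succ n =>
    exact .trans _ _ _ (.rel _ _ (StepT.subSub .one (pow n) .id)) (cSubS .one (powId n))

theorem var_pow (n m : ℕ) : ETm (.sub (vr n) (pow m)) (vr (n + m + 1)) := by
  cases n with
  | zero => rw [Nat.zero_add]; exact .refl _
  | succ n =>
    have : n + 1 + m + 1 = (n + m + 1) + 1 := by omega
    rw [this]
    exact .trans _ _ _ (.rel _ _ (StepT.subSub .one (pow n) (pow m))) (cSubS .one (powPow n m))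

theorem var_cons (n : ℕ) (A : Tm) (s : Sb) :
    ETm (.sub (vr (n + 1)) (.cons A s)) (.sub (vr n) s) := by
  cases n with
  | zero =>
    exact .trans _ _ _ (.rel _ _ (StepT.subSub .one (pow 0) (.cons A s)))
      (cSubS .one (.rel _ _ (StepS.shCons A s)))
  | succ n =>
    refine .trans _ _ _ (.rel _ _ (StepT.subSub .one (pow (n+1)) (.cons A s))) ?_
    refine .trans _ _ _ (cSubS .one (powCons' n A s)) ?_
    exact .symm _ _ (.rel _ _ (StepT.subSub .one (pow n) s))

theorem lookLiftLt : ∀ (k n : ℕ) (u : Sb), n < k → ETm (.sub (vr n) (liftK k u)) (vr n) := by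
  intro k
  induction k with
  | zero => intro n u h; omega
  | succ k ih =>
    intro n u h
    cases n with
    | zero => exact .rel _ _ (StepT.subOneCons .one (.comp (liftK k u) .sh))
    | succ n =>
      refine .trans _ _ _ (var_liftS n (liftK k u)) ?_
      refine .trans _ _ _ (cSubM .sh (ih n u (by omega))) ?_
      exact var_shift n

/-- Shift a term by `k` extra indices via an explicit substitution. -/
def shEnt : ℕ → Tm → Tm
  | 0, A => A
  | k + 1, A => .sub A (pow k)

theorem cshEnt (k : ℕ) {a b} (h : ETm a b) : ETm (shEnt k a) (shEnt k b) := by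
  cases k with
  | zero => exact h
  | succ k => exact cSubM (pow k) h

theorem shEnt_vr (k j : ℕ) : ETm (shEnt k (vr j)) (vr (j + k)) := by
  cases k with
  | zero => exact .refl _
  | succ k =>
    have : j + (k + 1) = j + k + 1 := by omega
    rw [this]; exact var_pow j k

theorem shEnt_shift (k : ℕ) (A : Tm) : ETm (.sub (shEnt k A) .sh) (shEnt (k + 1) A) := by
  cases k with
  | zero => exact .refl _
  | succ k =>
    exact .trans _ _ _ (.rel _ _ (StepT.subSub A (pow k) .sh)) (cSubS A (powShift k))

theorem lookLiftGe : ∀ (k n : ℕ) (u : Sb),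
    ETm (.sub (vr (n + k)) (liftK k u)) (shEnt k (.sub (vr n) u)) := by
  intro k
  induction k with
  | zero => intro n u; exact .refl _
  | succ k ih =>
    intro n u
    have : n + (k + 1) = (n + k) + 1 := by omega
    rw [this]
    refine .trans _ _ _ (var_liftS (n + k) (liftK k u)) ?_
    refine .trans _ _ _ (cSubM .sh (ih n u)) ?_
    exact shEnt_shift k _

end CAU

namespace CAU

def powIdx? : Sb → Option ℕ
  | .sh => some 0
  | .comp .sh s => (powIdx? s).map (· + 1)
  | _ => none

theorem powIdx?_pow : ∀ n, powIdx? (pow n) = some n := by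
  intro n
  induction n with
  | zero => rfl
  | succ n ih => simp [pow, powIdx?, ih]

/-- Meta-level shift by `m` of indices ≥ `d` on normal terms. -/
def pshM (d m : ℕ) : Tm → Tm
  | .lam A => .lam (pshM (d + 1) m A)
  | .ap A B => .ap (pshM d m A) (pshM d m B)
  | .lets A B => .lets (pshM d m A) (pshM (d + 1) m B)
  | .bang q A => .bang q (pshM d m A)
  | .ann q A => .ann q (pshM d m A)
  | .insp ϑ => .insp fun i => pshM d m (ϑ i)
  | .one => if 0 < d then .one else vr m
  | .sub .one s =>
      match powIdx? s with
      | some j => vr (if j + 1 < d then j + 1 else j + 1 + m)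
      | none => .sub .one s
  | .sub A s => .sub A s
  | .er A => .er A

theorem pshM_vr (d m n : ℕ) : pshM d m (vr n) = vr (if n < d then n else n + m) := by
  cases n with
  | zero =>
    by_cases h : 0 < d <;> simp [pshM, vr_zero, h, Nat.zero_add]
  | succ n =>
    rw [vr_succ]
    simp only [pshM, powIdx?_pow]

/-- Grammar of normal terms (no explicit operators except variable encodings). -/
inductive NF : Tm → Prop
  | one : NF .one
  | oneSh (n) : NF (.sub .one (pow n))
  | lam {A} : NF A → NF (.lam A)
  | ap {A B} : NF A → NF B → NF (.ap A B)
  | lets {A B} : NF A → NF B → NF (.lets A B)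
  | bang (q) {A} : NF A → NF (.bang q A)
  | ann (q) {A} : NF A → NF (.ann q A)
  | insp {ϑ} : (∀ i, NF (ϑ i)) → NF (.insp ϑ)

/-- Grammar of erased normal terms (no annotations outside bangs). -/
inductive NFE : Tm → Prop
  | one : NFE .one
  | oneSh (n) : NFE (.sub .one (pow n))
  | lam {A} : NFE A → NFE (.lam A)
  | ap {A B} : NFE A → NFE B → NFE (.ap A B)
  | lets {A B} : NFE A → NFE B → NFE (.lets A B)
  | bang (q) {A} : NF A → NFE (.bang q A)
  | insp {ϑ} : (∀ i, NFE (ϑ i)) → NFE (.insp ϑ)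

theorem NF_vr (n : ℕ) : NF (vr n) := by
  cases n with
  | zero => exact .one
  | succ n => exact .oneSh n

theorem NFE_vr (n : ℕ) : NFE (vr n) := by
  cases n with
  | zero => exact .one
  | succ n => exact .oneSh n

theorem NFE.toNF {A} (h : NFE A) : NF A := by
  induction h with
  | one => exact .one
  | oneSh n => exact .oneSh n
  | lam _ ih => exact .lam ih
  | ap _ _ ih1 ih2 => exact .ap ih1 ih2
  | lets _ _ ih1 ih2 => exact .lets ih1 ih2
  | bang q hA => exact .bang q hA
  | insp _ ih => exact .insp ih

theorem pshM_NF {A} (h : NF A) : ∀ d m, NF (pshM d m A) := by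
  induction h with
  | one => intro d m; rw [show Tm.one = vr 0 from rfl, pshM_vr]; exact NF_vr _
  | oneSh n => intro d m; rw [show Tm.sub .one (pow n) = vr (n+1) from rfl, pshM_vr]; exact NF_vr _
  | lam _ ih => intro d m; exact .lam (ih _ _)
  | ap _ _ ih1 ih2 => intro d m; exact .ap (ih1 _ _) (ih2 _ _)
  | lets _ _ ih1 ih2 => intro d m; exact .lets (ih1 _ _) (ih2 _ _)
  | bang q _ ih => intro d m; exact .bang q (ih _ _)
  | ann q _ ih => intro d m; exact .ann q (ih _ _)
  | insp _ ih => intro d m; exact .insp fun i => ih i _ _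

theorem pshM_NFE {A} (h : NFE A) : ∀ d m, NFE (pshM d m A) := by
  induction h with
  | one => intro d m; rw [show Tm.one = vr 0 from rfl, pshM_vr]; exact NFE_vr _
  | oneSh n => intro d m; rw [show Tm.sub .one (pow n) = vr (n+1) from rfl, pshM_vr]; exact NFE_vr _
  | lam _ ih => intro d m; exact .lam (ih _ _)
  | ap _ _ ih1 ih2 => intro d m; exact .ap (ih1 _ _) (ih2 _ _)
  | lets _ _ ih1 ih2 => intro d m; exact .lets (ih1 _ _) (ih2 _ _)
  | bang q hA => intro d m; exact .bang q (pshM_NF hA _ _)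
  | insp _ ih => intro d m; exact .insp fun i => ih i _ _

theorem pshM_zero {A} (h : NF A) : ∀ d, pshM d 0 A = A := by
  induction h with
  | one => intro d; rw [show Tm.one = vr 0 from rfl, pshM_vr]; split <;> rfl
  | oneSh n =>
    intro d; rw [show Tm.sub .one (pow n) = vr (n+1) from rfl, pshM_vr]; split <;> rfl
  | lam _ ih => intro d; simp [pshM, ih]
  | ap _ _ ih1 ih2 => intro d; simp [pshM, ih1, ih2]
  | lets _ _ ih1 ih2 => intro d; simp [pshM, ih1, ih2]
  | bang q _ ih => intro d; simp [pshM, ih]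
  | ann q _ ih => intro d; simp [pshM, ih]
  | insp _ ih => intro d; simp [pshM]; funext i; exact ih i _

theorem pshM_add_vr (n d a b : ℕ) : pshM d b (pshM d a (vr n)) = pshM d (a + b) (vr n) := by
  rw [pshM_vr, pshM_vr, pshM_vr]
  by_cases h : n < d
  · simp [h]
  · have h2 : ¬ (n + a < d) := by omega
    simp [h, h2]
    exact congrArg vr (by omega)

theorem pshM_add {A} (h : NF A) : ∀ d a b, pshM d b (pshM d a A) = pshM d (a + b) A := by
  induction h with
  | one =>
    intro d a b
    exact pshM_add_vr 0 d a b
  | oneSh n =>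
    intro d a b
    exact pshM_add_vr (n+1) d a b
  | lam _ ih => intro d a b; simp [pshM, ih]
  | ap _ _ ih1 ih2 => intro d a b; simp [pshM, ih1, ih2]
  | lets _ _ ih1 ih2 => intro d a b; simp [pshM, ih1, ih2]
  | bang q _ ih => intro d a b; simp [pshM, ih]
  | ann q _ ih => intro d a b; simp [pshM, ih]
  | insp _ ih => intro d a b; simp [pshM]; funext i; exact ih i _ _ _

def eraseTop : Tm → Tm
  | .ann _ A => A
  | A => A

theorem eraseTop_ann (q A) : eraseTop (.ann q A) = A := rfl

theorem NFE_eraseTop {A} (h : NFE A) : eraseTop A = A := by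
  cases h <;> rfl

/-- A good (value-like) normal term: possibly an annotation on an erased normal term. -/
def GoodV (A : Tm) : Prop := (∃ q Z, A = .ann q Z ∧ NFE Z) ∨ NFE A

theorem GoodV_NF {A} (h : GoodV A) : NF A := by
  rcases h with ⟨q, Z, rfl, hZ⟩ | h
  · exact .ann q hZ.toNF
  · exact h.toNF

theorem GoodV_eraseTop {A} (h : GoodV A) : NFE (eraseTop A) := by
  rcases h with ⟨q, Z, rfl, hZ⟩ | h
  · exact hZ
  · rw [NFE_eraseTop h]; exact h

theorem GoodV_pshM {A} (h : GoodV A) (d m : ℕ) : GoodV (pshM d m A) := by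
  rcases h with ⟨q, Z, rfl, hZ⟩ | h
  · exact Or.inl ⟨q, pshM d m Z, rfl, pshM_NFE hZ d m⟩
  · exact Or.inr (pshM_NFE h d m)

theorem pshM_eraseTop {A} (h : GoodV A) (d m : ℕ) :
    eraseTop (pshM d m A) = pshM d m (eraseTop A) := by
  rcases h with ⟨q, Z, rfl, hZ⟩ | h
  · rfl
  · rw [NFE_eraseTop h, NFE_eraseTop (pshM_NFE h d m)]

end CAU

namespace CAU

/-- Extend a semantic environment under a binder. -/
def extE (φ : ℕ → Tm) : ℕ → Tm
  | 0 => vr 0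
  | n + 1 => pshM 0 1 (φ n)

def extK : ℕ → (ℕ → Tm) → (ℕ → Tm)
  | 0, φ => φ
  | k + 1, φ => extE (extK k φ)

/-- Normal form of `M[φ]` (`b = true`: additionally erased). -/
def ev : Bool → NTm → (ℕ → Tm) → Tm
  | b, .var n, φ => if b then eraseTop (φ n) else φ n
  | b, .lam M, φ => .lam (ev b M (extE φ))
  | b, .ap M N, φ => .ap (ev b M φ) (ev b N φ)
  | b, .lets M N, φ => .lets (ev b M φ) (ev b N (extE φ))
  | _, .bang q M, φ => .bang (toTr q) (ev false M φ)
  | b, .ann q M, φ => if b then ev b M φ else .ann (toTr q) (ev b M φ)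
  | b, .insp ϑ, φ => .insp fun i => ev b (ϑ i) φ

theorem GoodV_extE {φ} (h : ∀ n, GoodV (φ n)) : ∀ n, GoodV (extE φ n) := by
  intro n
  cases n with
  | zero => exact Or.inr (NFE_vr 0)
  | succ n => exact GoodV_pshM (h n) 0 1

theorem ev_nf : ∀ (M : NTm) (φ), (∀ n, GoodV (φ n)) →
    NF (ev false M φ) ∧ NFE (ev true M φ) := by
  intro M
  induction M with
  | var n => intro φ h; exact ⟨by simpa [ev] using GoodV_NF (h n),
      by simpa [ev] using GoodV_eraseTop (h n)⟩
  | lam M ih =>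
    intro φ h
    obtain ⟨h1, h2⟩ := ih (extE φ) (GoodV_extE h)
    exact ⟨.lam h1, .lam h2⟩
  | ap M N ih1 ih2 =>
    intro φ h
    exact ⟨.ap (ih1 φ h).1 (ih2 φ h).1, .ap (ih1 φ h).2 (ih2 φ h).2⟩
  | lets M N ih1 ih2 =>
    intro φ h
    exact ⟨.lets (ih1 φ h).1 (ih2 _ (GoodV_extE h)).1,
      .lets (ih1 φ h).2 (ih2 _ (GoodV_extE h)).2⟩
  | bang q M ih =>
    intro φ h
    exact ⟨.bang _ (ih φ h).1, .bang _ (ih φ h).1⟩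
  | ann q M ih =>
    intro φ h
    exact ⟨by simpa [ev] using NF.ann (toTr q) (ih φ h).1, by simpa [ev] using (ih φ h).2⟩
  | insp ϑ ih =>
    intro φ h
    exact ⟨.insp fun i => (ih i φ h).1, .insp fun i => (ih i φ h).2⟩

/-- Erasure is the identity on erased normal terms. -/
theorem er_nfe {A} (h : NFE A) : ETm (.er A) A := by
  induction h with
  | one => exact .rel _ _ StepT.erOne
  | oneSh n => exact .rel _ _ (StepT.erOneSh n)
  | lam _ ih => exact .trans _ _ _ (.rel _ _ (StepT.erLam _)) (cLam ih)
  | ap _ _ ih1 ih2 =>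
    refine .trans _ _ _ (.rel _ _ (StepT.erAp _ _)) ?_
    exact .trans _ _ _ (cApL _ ih1) (cApR _ ih2)
  | lets _ _ ih1 ih2 =>
    refine .trans _ _ _ (.rel _ _ (StepT.erLets _ _)) ?_
    exact .trans _ _ _ (cLetsL _ ih1) (cLetsR _ ih2)
  | bang q hA => exact .rel _ _ (StepT.erBang _ _)
  | insp _ ih =>
    exact .trans _ _ _ (.rel _ _ (StepT.erInsp _)) (cInsp fun i => ih i)

theorem GoodV_er {A} (h : GoodV A) : ETm (.er A) (eraseTop A) := by
  rcases h with ⟨q, Z, rfl, hZ⟩ | h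
  · exact .trans _ _ _ (.rel _ _ (StepT.erAnn q Z)) (er_nfe hZ)
  · rw [NFE_eraseTop h]; exact er_nfe h

/-- Extraction is trivial on erased normal terms. -/
theorem ext_nfe {A} (h : NFE A) : ETr (.ext A) .r := by
  induction h with
  | one => exact .rel _ _ StepQ.extOne
  | oneSh n => exact .rel _ _ (StepQ.extOneSh n)
  | lam _ ih =>
    refine .trans _ _ _ (.rel _ _ (StepQ.extLam _)) ?_
    exact .trans _ _ _ (cQLam ih) (.rel _ _ StepQ.lamRefl)
  | ap _ _ ih1 ih2 =>
    refine .trans _ _ _ (.rel _ _ (StepQ.extAp _ _)) ?_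
    refine .trans _ _ _ (cQApL _ ih1) ?_
    exact .trans _ _ _ (cQApR _ ih2) (.rel _ _ StepQ.apRefl)
  | lets _ _ ih1 ih2 =>
    refine .trans _ _ _ (.rel _ _ (StepQ.extLets _ _)) ?_
    refine .trans _ _ _ (cQLetsL _ ih1) ?_
    exact .trans _ _ _ (cQLetsR _ ih2) (.rel _ _ StepQ.letsRefl)
  | bang q hA => exact .rel _ _ (StepQ.extBang _ _)
  | insp _ ih =>
    refine .trans _ _ _ (.rel _ _ (StepQ.extInsp _)) ?_
    exact .trans _ _ _ (cTb fun i => ih i) (.rel _ _ StepQ.tbRefl)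

/-- Substitution by a lifted shift realizes the meta-level shift on normal terms. -/
theorem sub_sh_nf {A} (h : NF A) : ∀ d, ETm (.sub A (liftK d .sh)) (pshM d 1 A) := by
  induction h with
  | one =>
    intro d
    cases d with
    | zero => exact .refl _
    | succ d =>
      rw [show pshM (d+1) 1 .one = .one by simp [pshM]]
      exact .rel _ _ (StepT.subOneCons _ _)
  | oneSh n =>
    intro d
    rw [show Tm.sub .one (pow n) = vr (n+1) from rfl, pshM_vr]
    by_cases hd : n + 1 < d
    · rw [if_pos hd]; exact lookLiftLt d (n+1) .sh hd
    · rw [if_neg hd]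
      have he : (n + 1 - d) + d = n + 1 := by omega
      rw [show vr (n+1) = vr ((n + 1 - d) + d) from congrArg vr (by omega)]
      refine .trans _ _ _ (lookLiftGe d (n + 1 - d) .sh) ?_
      refine .trans _ _ _ (cshEnt d (var_shift (n + 1 - d))) ?_
      refine .trans _ _ _ (shEnt_vr d (n + 1 - d + 1)) ?_
      rw [show (n + 1 - d + 1) + d = n + 1 + 1 from by omega]
      exact .refl _
  | lam _ ih =>
    intro d
    refine .trans _ _ _ (.rel _ _ (StepT.subLam _ _)) ?_
    exact cLam (ih (d + 1))
  | ap _ _ ih1 ih2 =>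
    intro d
    refine .trans _ _ _ (.rel _ _ (StepT.subAp _ _ _)) ?_
    exact .trans _ _ _ (cApL _ (ih1 d)) (cApR _ (ih2 d))
  | lets _ _ ih1 ih2 =>
    intro d
    refine .trans _ _ _ (.rel _ _ (StepT.subLets _ _ _)) ?_
    exact .trans _ _ _ (cLetsL _ (ih1 d)) (cLetsR _ (ih2 (d + 1)))
  | bang q _ ih =>
    intro d
    exact .trans _ _ _ (.rel _ _ (StepT.subBang _ _ _)) (cBang _ (ih d))
  | ann q _ ih =>
    intro d
    exact .trans _ _ _ (.rel _ _ (StepT.subAnn _ _ _)) (cAnn _ (ih d))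
  | insp _ ih =>
    intro d
    exact .trans _ _ _ (.rel _ _ (StepT.subInsp _ _)) (cInsp fun i => ih i d)

theorem sub_pow_nf : ∀ m {A}, NF A → ETm (.sub A (pow m)) (pshM 0 (m + 1) A) := by
  intro m
  induction m with
  | zero => intro A h; exact sub_sh_nf h 0
  | succ m ih =>
    intro A h
    refine .trans _ _ _ (.symm _ _ (.rel _ _ (StepT.subSub A .sh (pow m)))) ?_
    refine .trans _ _ _ (cSubM (pow m) (sub_sh_nf h 0)) ?_
    refine .trans _ _ _ (ih (pshM_NF h 0 1)) ?_
    rw [pshM_add h 0 1 (m + 1), show 1 + (m + 1) = m + 1 + 1 from by omega]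
    exact .refl _

/-- Substituting a single value at depth `d + k` into a term shifted by `k + 1`. -/
theorem sub_single_nf {A} (h : NF A) : ∀ d k (X : Tm),
    ETm (.sub (pshM d (k + 1) A) (liftK (d + k) (.cons X .id))) (pshM d k A) := by
  induction h with
  | one =>
    intro d k X
    cases d with
    | zero =>
      rw [show Tm.one = vr 0 from rfl, pshM_vr, pshM_vr]
      simp only [Nat.lt_irrefl, if_false, Nat.zero_add]
      rw [show vr (k + 1) = vr (1 + k) from congrArg vr (by omega)]
      refine .trans _ _ _ (lookLiftGe k 1 (.cons X .id)) ?_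
      refine .trans _ _ _ (cshEnt k (var_cons 0 X .id)) ?_
      refine .trans _ _ _ (cshEnt k (var_id 0)) ?_
      refine .trans _ _ _ (shEnt_vr k 0) ?_
      rw [Nat.zero_add]; exact .refl _
    | succ d =>
      rw [show Tm.one = vr 0 from rfl, pshM_vr, pshM_vr]
      simp only [Nat.succ_pos, if_pos, Nat.zero_lt_succ]
      exact lookLiftLt _ 0 _ (by omega)
  | oneSh n =>
    intro d k X
    rw [show Tm.sub .one (pow n) = vr (n+1) from rfl, pshM_vr, pshM_vr]
    by_cases hd : n + 1 < d
    · rw [if_pos hd, if_pos hd]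
      exact lookLiftLt _ (n+1) _ (by omega)
    · rw [if_neg hd, if_neg hd]
      rw [show vr (n + 1 + (k + 1)) = vr ((n + 2 - d) + (d + k)) from congrArg vr (by omega)]
      refine .trans _ _ _ (lookLiftGe (d + k) (n + 2 - d) (.cons X .id)) ?_
      rw [show n + 2 - d = (n + 1 - d) + 1 from by omega]
      refine .trans _ _ _ (cshEnt (d+k) (var_cons (n + 1 - d) X .id)) ?_
      refine .trans _ _ _ (cshEnt (d+k) (var_id (n + 1 - d))) ?_
      refine .trans _ _ _ (shEnt_vr (d+k) (n + 1 - d)) ?_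
      rw [show (n + 1 - d) + (d + k) = n + 1 + k from by omega]
      exact .refl _
  | lam _ ih =>
    intro d k X
    refine .trans _ _ _ (.rel _ _ (StepT.subLam _ _)) ?_
    refine cLam ?_
    have := ih (d + 1) k X
    rw [show d + 1 + k = d + k + 1 from by omega] at this
    exact this
  | ap _ _ ih1 ih2 =>
    intro d k X
    refine .trans _ _ _ (.rel _ _ (StepT.subAp _ _ _)) ?_
    exact .trans _ _ _ (cApL _ (ih1 d k X)) (cApR _ (ih2 d k X))
  | lets _ _ ih1 ih2 =>
    intro d k X
    refine .trans _ _ _ (.rel _ _ (StepT.subLets _ _ _)) ?_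
    refine .trans _ _ _ (cLetsL _ (ih1 d k X)) ?_
    refine cLetsR _ ?_
    have := ih2 (d + 1) k X
    rw [show d + 1 + k = d + k + 1 from by omega] at this
    exact this
  | bang q _ ih =>
    intro d k X
    exact .trans _ _ _ (.rel _ _ (StepT.subBang _ _ _)) (cBang _ (ih d k X))
  | ann q _ ih =>
    intro d k X
    exact .trans _ _ _ (.rel _ _ (StepT.subAnn _ _ _)) (cAnn _ (ih d k X))
  | insp _ ih =>
    intro d k X
    exact .trans _ _ _ (.rel _ _ (StepT.subInsp _ _)) (cInsp fun i => ih i d k X)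

end CAU

namespace CAU

theorem eraseTop_vr (n : ℕ) : eraseTop (vr n) = vr n := by
  cases n <;> rfl

theorem pshM_ann (d m q A) : pshM d m (.ann q A) = .ann q (pshM d m A) := rfl

theorem shEnt_nf {Z} (h : NF Z) (k : ℕ) : ETm (shEnt k Z) (pshM 0 k Z) := by
  cases k with
  | zero => rw [pshM_zero h]; exact .refl _
  | succ k => exact sub_pow_nf k h

/-- A semantic environment realizes an explicit substitution. -/
def Rel (φ : ℕ → Tm) (u : Sb) : Prop :=
  ∀ n, GoodV (φ n) ∧ ETm (.sub (vr n) u) (φ n)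

theorem RelLift {φ u} (h : Rel φ u) : Rel (extE φ) (liftS u) := by
  intro n
  cases n with
  | zero =>
    exact ⟨Or.inr (NFE_vr 0), .rel _ _ (StepT.subOneCons .one (.comp u .sh))⟩
  | succ n =>
    refine ⟨GoodV_pshM (h n).1 0 1, ?_⟩
    refine .trans _ _ _ (var_liftS n u) ?_
    refine .trans _ _ _ (cSubM .sh (h n).2) ?_
    exact sub_sh_nf (GoodV_NF (h n).1) 0

theorem sub_ev : ∀ (M : NTm) (φ u), Rel φ u →
    ETm (.sub (toTm M) u) (ev false M φ) ∧
    ETm (.er (.sub (toTm M) u)) (ev true M φ) := by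
  intro M
  induction M with
  | var n =>
    intro φ u h
    constructor
    · simpa [ev] using (h n).2
    · show ETm (.er (.sub (vr n) u)) _
      simp only [ev, if_true]
      exact .trans _ _ _ (cEr (h n).2) (GoodV_er (h n).1)
  | lam M ih =>
    intro φ u h
    have ih' := ih (extE φ) (liftS u) (RelLift h)
    constructor
    · show ETm (.sub (.lam (toTm M)) u) (.lam (ev false M (extE φ)))
      exact .trans _ _ _ (.rel _ _ (StepT.subLam _ _)) (cLam ih'.1)
    · show ETm (.er (.sub (.lam (toTm M)) u)) (.lam (ev true M (extE φ)))
      refine .trans _ _ _ (cEr (.rel _ _ (StepT.subLam _ _))) ?_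
      exact .trans _ _ _ (.rel _ _ (StepT.erLam _)) (cLam ih'.2)
  | ap M N ih1 ih2 =>
    intro φ u h
    have h1 := ih1 φ u h; have h2 := ih2 φ u h
    constructor
    · show ETm (.sub (.ap (toTm M) (toTm N)) u) (.ap (ev false M φ) (ev false N φ))
      refine .trans _ _ _ (.rel _ _ (StepT.subAp _ _ _)) ?_
      exact .trans _ _ _ (cApL _ h1.1) (cApR _ h2.1)
    · show ETm (.er (.sub (.ap (toTm M) (toTm N)) u)) (.ap (ev true M φ) (ev true N φ))
      refine .trans _ _ _ (cEr (.rel _ _ (StepT.subAp _ _ _))) ?_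
      refine .trans _ _ _ (.rel _ _ (StepT.erAp _ _)) ?_
      exact .trans _ _ _ (cApL _ h1.2) (cApR _ h2.2)
  | lets M N ih1 ih2 =>
    intro φ u h
    have h1 := ih1 φ u h; have h2 := ih2 (extE φ) (liftS u) (RelLift h)
    constructor
    · show ETm (.sub (.lets (toTm M) (toTm N)) u)
        (.lets (ev false M φ) (ev false N (extE φ)))
      refine .trans _ _ _ (.rel _ _ (StepT.subLets _ _ _)) ?_
      exact .trans _ _ _ (cLetsL _ h1.1) (cLetsR _ h2.1)
    · show ETm (.er (.sub (.lets (toTm M) (toTm N)) u))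
        (.lets (ev true M φ) (ev true N (extE φ)))
      refine .trans _ _ _ (cEr (.rel _ _ (StepT.subLets _ _ _))) ?_
      refine .trans _ _ _ (.rel _ _ (StepT.erLets _ _)) ?_
      exact .trans _ _ _ (cLetsL _ h1.2) (cLetsR _ h2.2)
  | bang q M ih =>
    intro φ u h
    have h1 := ih φ u h
    constructor
    · show ETm (.sub (.bang (toTr q) (toTm M)) u) (.bang (toTr q) (ev false M φ))
      exact .trans _ _ _ (.rel _ _ (StepT.subBang _ _ _)) (cBang _ h1.1)
    · show ETm (.er (.sub (.bang (toTr q) (toTm M)) u)) (.bang (toTr q) (ev false M φ))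
      refine .trans _ _ _ (cEr (.rel _ _ (StepT.subBang _ _ _))) ?_
      exact .trans _ _ _ (.rel _ _ (StepT.erBang _ _)) (cBang _ h1.1)
  | ann q M ih =>
    intro φ u h
    have h1 := ih φ u h
    constructor
    · show ETm (.sub (.ann (toTr q) (toTm M)) u) (ev false (.ann q M) φ)
      simp only [ev, if_false, Bool.false_eq_true]
      exact .trans _ _ _ (.rel _ _ (StepT.subAnn _ _ _)) (cAnn _ h1.1)
    · show ETm (.er (.sub (.ann (toTr q) (toTm M)) u)) (ev true (.ann q M) φ)
      simp only [ev, if_true]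
      refine .trans _ _ _ (cEr (.rel _ _ (StepT.subAnn _ _ _))) ?_
      exact .trans _ _ _ (.rel _ _ (StepT.erAnn _ _)) h1.2
  | insp ϑ ih =>
    intro φ u h
    constructor
    · show ETm (.sub (.insp fun i => toTm (ϑ i)) u) (.insp fun i => ev false (ϑ i) φ)
      refine .trans _ _ _ (.rel _ _ (StepT.subInsp _ _)) ?_
      exact cInsp fun i => (ih i φ u h).1
    · show ETm (.er (.sub (.insp fun i => toTm (ϑ i)) u)) (.insp fun i => ev true (ϑ i) φ)
      refine .trans _ _ _ (cEr (.rel _ _ (StepT.subInsp _ _))) ?_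
      refine .trans _ _ _ (.rel _ _ (StepT.erInsp _)) ?_
      exact cInsp fun i => (ih i φ u h).2

theorem extK_spec (ψ : ℕ → Tm) (hψ : ∀ n, NF (ψ n)) :
    ∀ k n, extK k ψ n = if n < k then vr n else pshM 0 k (ψ (n - k)) := by
  intro k
  induction k with
  | zero =>
    intro n
    rw [if_neg (Nat.not_lt_zero n)]
    show ψ n = pshM 0 0 (ψ (n - 0))
    rw [Nat.sub_zero, pshM_zero (hψ n)]
  | succ k ih =>
    intro n
    cases n with
    | zero => simp [extK, extE]
    | succ n =>
      show pshM 0 1 (extK k ψ n) = _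
      rw [ih n]
      by_cases hn : n < k
      · rw [if_pos hn, if_pos (by omega), pshM_vr]
        simp
      · rw [if_neg hn, if_neg (by omega), pshM_add (hψ _) 0 k 1]
        rw [show n + 1 - (k + 1) = n - k from by omega]

theorem extK_comm (φ : ℕ → Tm) : ∀ k, extK k (extE φ) = extK (k + 1) φ := by
  intro k
  induction k with
  | zero => rfl
  | succ k ih => show extE _ = extE _; rw [ih]

theorem subst_beta (φ : ℕ → Tm) (hφ : ∀ n, GoodV (φ n)) (Zc : Tm) (hZc : NFE Zc) :
    ∀ (M : NTm) (k : ℕ) (b : Bool),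
      ETm (.sub (ev b M (extK (k + 1) φ)) (liftK k (.cons Zc .id)))
        (ev b M (extK k (fun n => match n with | 0 => .ann .r Zc | n + 1 => φ n))) := by
  set φ' : ℕ → Tm := fun n => match n with | 0 => .ann .r Zc | n + 1 => φ n with hφ'def
  have hφ' : ∀ n, GoodV (φ' n) := by
    intro n
    cases n with
    | zero => exact Or.inl ⟨.r, Zc, rfl, hZc⟩
    | succ n => exact hφ n
  have hNF : ∀ n, NF (φ n) := fun n => GoodV_NF (hφ n)
  have hNF' : ∀ n, NF (φ' n) := fun n => GoodV_NF (hφ' n)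
  have core : ∀ k, ETm (.sub (vr k) (liftK k (.cons Zc .id))) (pshM 0 k Zc) := by
    intro k
    rw [show vr k = vr (0 + k) from congrArg vr (by omega)]
    refine .trans _ _ _ (lookLiftGe k 0 (.cons Zc .id)) ?_
    refine .trans _ _ _ (cshEnt k (.rel _ _ (StepT.subOneCons Zc .id))) ?_
    exact shEnt_nf hZc.toNF k
  intro M
  induction M with
  | var n =>
    intro k b
    have e1 := extK_spec φ hNF (k+1) n
    have e2 := extK_spec φ' hNF' k n
    show ETm (.sub (if b then eraseTop (extK (k+1) φ n) else extK (k+1) φ n)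
        (liftK k (.cons Zc .id)))
      (if b then eraseTop (extK k φ' n) else extK k φ' n)
    rcases Nat.lt_trichotomy n k with hn | rfl | hn
    · rw [if_pos (show n < k + 1 by omega)] at e1
      rw [if_pos hn] at e2
      rw [e1, e2, eraseTop_vr, ite_self]
      exact lookLiftLt k n _ hn
    · rw [if_pos (show n < n + 1 by omega)] at e1
      rw [if_neg (show ¬ n < n by omega), Nat.sub_self] at e2
      have e3 : φ' 0 = .ann .r Zc := rfl
      rw [e1, e2, e3, eraseTop_vr, pshM_ann, eraseTop_ann, ite_self]
      cases b
      · simp only [Bool.false_eq_true, if_false]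
        exact .trans _ _ _ (core n) (.symm _ _ (.rel _ _ (StepT.annRefl _)))
      · simp only [if_true]
        exact core n
    · rw [if_neg (show ¬ n < k + 1 by omega)] at e1
      rw [if_neg (show ¬ n < k by omega)] at e2
      have e3 : φ' ((n - k - 1) + 1) = φ (n - k - 1) := rfl
      rw [show n - k = (n - k - 1) + 1 from by omega, e3] at e2
      rw [e1, e2, show n - (k + 1) = n - k - 1 from by omega]
      have base := sub_single_nf (hNF (n-k-1)) 0 k Zc
      rw [Nat.zero_add] at base
      cases b
      · simpa only [Bool.false_eq_true, if_false] using base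
      · simp only [if_true]
        rw [pshM_eraseTop (hφ _) 0 (k+1), pshM_eraseTop (hφ _) 0 k]
        have h2 := sub_single_nf (GoodV_eraseTop (hφ (n-k-1))).toNF 0 k Zc
        rwa [Nat.zero_add] at h2
  | lam M ih =>
    intro k b
    show ETm (.sub (.lam (ev b M (extE (extK (k+1) φ)))) _) (.lam (ev b M (extE (extK k φ'))))
    refine .trans _ _ _ (.rel _ _ (StepT.subLam _ _)) ?_
    exact cLam (ih (k+1) b)
  | ap M N ih1 ih2 =>
    intro k b
    show ETm (.sub (.ap _ _) _) (.ap _ _)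
    refine .trans _ _ _ (.rel _ _ (StepT.subAp _ _ _)) ?_
    exact .trans _ _ _ (cApL _ (ih1 k b)) (cApR _ (ih2 k b))
  | lets M N ih1 ih2 =>
    intro k b
    show ETm (.sub (.lets _ (ev b N (extE (extK (k+1) φ)))) _)
      (.lets _ (ev b N (extE (extK k φ'))))
    refine .trans _ _ _ (.rel _ _ (StepT.subLets _ _ _)) ?_
    exact .trans _ _ _ (cLetsL _ (ih1 k b)) (cLetsR _ (ih2 (k+1) b))
  | bang q M ih =>
    intro k b
    show ETm (.sub (.bang (toTr q) (ev false M _)) _) (.bang (toTr q) (ev false M _))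
    refine .trans _ _ _ (.rel _ _ (StepT.subBang _ _ _)) ?_
    exact cBang _ (ih k false)
  | ann q M ih =>
    intro k b
    cases b
    · show ETm (.sub (ev false (.ann q M) _) _) (ev false (.ann q M) _)
      simp only [ev, if_false, Bool.false_eq_true]
      refine .trans _ _ _ (.rel _ _ (StepT.subAnn _ _ _)) ?_
      exact cAnn _ (ih k false)
    · show ETm (.sub (ev true (.ann q M) _) _) (ev true (.ann q M) _)
      simp only [ev, if_true]
      exact ih k true
  | insp ϑ ih =>
    intro k b
    show ETm (.sub (.insp fun i => ev b (ϑ i) _) _) (.insp fun i => ev b (ϑ i) _)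
    refine .trans _ _ _ (.rel _ _ (StepT.subInsp _ _)) ?_
    exact cInsp fun i => ih i k b

end CAU

namespace CAU

mutual
  /-- Normal form of the erased denotation of a closure. -/
  def cloNF : Clo → Tm
    | .lamC M e => .lam (ev true M (extE (envNF e)))
    | .bangC q C => .bang q (cloNF C)
  /-- Normal form of the denotation of a value. -/
  def valNF : Val → Tm
    | .mk q C => .ann q (cloNF C)
  /-- Semantic environment associated to a machine environment. -/
  def envNF : Env → ℕ → Tm
    | .nil => fun n => vr n
    | .cons V e => fun n => match n with | 0 => valNF V | n + 1 => envNF e n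
end

mutual
  theorem cloNF_spec : ∀ C : Clo, ETm (cloToTm C) (cloNF C) ∧ NFE (cloNF C)
    | .lamC M e => by
      constructor
      · show ETm (.er (.sub (.lam (toTm M)) (envToSub e))) (.lam (ev true M (extE (envNF e))))
        refine .trans _ _ _ (cEr (.rel _ _ (StepT.subLam (toTm M) (envToSub e)))) ?_
        refine .trans _ _ _ (.rel _ _ (StepT.erLam _)) ?_
        exact cLam (sub_ev M (extE (envNF e)) (liftS (envToSub e)) (RelLift (envNF_spec e))).2
      · show NFE (.lam (ev true M (extE (envNF e))))
        exact .lam (ev_nf M _ (GoodV_extE fun n => (envNF_spec e n).1)).2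
    | .bangC q C => by
      constructor
      · show ETm (.bang q (cloToTm C)) (.bang q (cloNF C))
        exact cBang q (cloNF_spec C).1
      · exact .bang q (cloNF_spec C).2.toNF
  theorem valNF_spec : ∀ V : Val, ETm (valToTm V) (valNF V) ∧ GoodV (valNF V)
    | .mk q C => by
      constructor
      · show ETm (.ann q (cloToTm C)) (.ann q (cloNF C))
        exact cAnn q (cloNF_spec C).1
      · exact Or.inl ⟨q, cloNF C, rfl, (cloNF_spec C).2⟩
  theorem envNF_spec : ∀ e : Env, Rel (envNF e) (envToSub e)
    | .nil => by
      intro n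
      refine ⟨Or.inr (NFE_vr n), ?_⟩
      show ETm (.sub (vr n) .id) (vr n)
      exact var_id n
    | .cons V e => by
      intro n
      cases n with
      | zero =>
        refine ⟨(valNF_spec V).2, ?_⟩
        show ETm (.sub (vr 0) (.cons (valToTm V) (envToSub e))) (valNF V)
        exact .trans _ _ _ (.rel _ _ (StepT.subOneCons _ _)) (valNF_spec V).1
      | succ n =>
        refine ⟨(envNF_spec e n).1, ?_⟩
        show ETm (.sub (vr (n + 1)) (.cons (valToTm V) (envToSub e))) (envNF e n)
        exact .trans _ _ _ (var_cons n _ _) (envNF_spec e n).2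
end

end CAU

namespace CAU

/-- Admissible beta rule for machine values:
`(q ▷ ⌊(λM̂)[e]⌋) (q' ▷ C)  ↠  t(app(q,q');β) ▷ ⌊M̂[(r ▷ C)·e]⌋`. -/
theorem machine_beta_admissible (nfq : Tr → Tr) (hq : IsNFQ nfq) :
    ∀ (q q' : Tr) (M : NTm) (e : Env) (C : Clo),
      Relation.ReflTransGen (SRed nfq)
        (.ap (.ann q (cloToTm (.lamC M e))) (.ann q' (cloToTm C)))
        (.ann (.t (.ap q q') .pb)
          (.er (.sub (toTm M) (.cons (valToTm (.mk .r C)) (envToSub e))))) := by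
  intro q q' M e C
  have hCe := cloNF_spec (.lamC M e)
  have hC := cloNF_spec C
  have hEnv := envNF_spec e
  have hφGood : ∀ n, GoodV (envNF e n) := fun n => (hEnv n).1
  set φ : ℕ → Tm := envNF e with hφdef
  set Zc : Tm := cloNF C with hZcdef
  set Z0 : Tm := ev true M (extE φ) with hZ0def
  have hcloEq : cloNF (.lamC M e) = .lam Z0 := rfl
  have hZ0 : NFE Z0 := (ev_nf M _ (GoodV_extE hφGood)).2
  rw [hcloEq] at hCe
  -- Step 1 : στ-equivalence to a focused redex
  have eq1 : ETm (.ap (.ann q (cloToTm (.lamC M e))) (.ann q' (cloToTm C)))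
      (.ann (.ap q q') (.ap (.lam Z0) Zc)) := by
    refine .trans _ _ _ (cApL _ (cAnn q hCe.1)) ?_
    refine .trans _ _ _ (cApR _ (cAnn q' hC.1)) ?_
    refine .trans _ _ _ (.rel _ _ (StepT.apAnnL q (.lam Z0) (.ann q' Zc))) ?_
    refine .trans _ _ _ (.rel _ _ (StepT.annM _ (StepT.apAnnR q' (.lam Z0) Zc))) ?_
    refine .trans _ _ _ (.rel _ _ (StepT.annAnn _ _ _)) ?_
    refine .trans _ _ _ (.rel _ _ (StepT.annQ _ (StepQ.tAp q .r .r q'))) ?_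
    refine .trans _ _ _ (.rel _ _ (StepT.annQ _ (StepQ.apL _ (StepQ.tReflR q)))) ?_
    exact .rel _ _ (StepT.annQ _ (StepQ.apR _ (StepQ.tReflL q')))
  -- Step 2 : lazy Beta
  have step2 : LBeta nfq (.ann (.ap q q') (.ap (.lam Z0) Zc))
      (.ann (.ap q q') (.ann (.t (.ap (.lam (.ext Z0)) (.ext Zc)) .pb)
        (.sub (.er Z0) (.cons (.er Zc) .id)))) :=
    LBeta.ann _ (LBeta.beta Z0 Zc)
  -- Step 3 : στ-equivalence to the target
  have relN : Rel (fun n => match n with | 0 => .ann .r Zc | n + 1 => φ n)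
      (.cons (valToTm (.mk .r C)) (envToSub e)) := by
    intro n
    cases n with
    | zero =>
      refine ⟨Or.inl ⟨.r, Zc, rfl, hC.2⟩, ?_⟩
      refine .trans _ _ _ (.rel _ _ (StepT.subOneCons _ _)) ?_
      show ETm (.ann .r (cloToTm C)) (.ann .r Zc)
      exact cAnn .r hC.1
    | succ n =>
      exact ⟨(hEnv n).1, .trans _ _ _ (var_cons n _ _) (hEnv n).2⟩
  have eq3 : ETm (.ann (.ap q q') (.ann (.t (.ap (.lam (.ext Z0)) (.ext Zc)) .pb)
        (.sub (.er Z0) (.cons (.er Zc) .id))))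
      (.ann (.t (.ap q q') .pb)
        (.er (.sub (toTm M) (.cons (valToTm (.mk .r C)) (envToSub e))))) := by
    refine .trans _ _ _ (.rel _ _ (StepT.annAnn (.ap q q') _ _)) ?_
    have tEq : ETr (.t (.ap q q') (.t (.ap (.lam (.ext Z0)) (.ext Zc)) .pb))
        (.t (.ap q q') .pb) := by
      refine cQTR (.ap q q') ?_
      refine .trans _ _ _ (cQTL .pb (cQApL (.ext Zc) (cQLam (ext_nfe hZ0)))) ?_
      refine .trans _ _ _ (cQTL .pb (cQApR (.lam .r) (ext_nfe hC.2))) ?_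
      refine .trans _ _ _ (.rel _ _ (StepQ.tL .pb (StepQ.apL .r StepQ.lamRefl))) ?_
      refine .trans _ _ _ (.rel _ _ (StepQ.tL .pb StepQ.apRefl)) ?_
      exact .rel _ _ (StepQ.tReflL .pb)
    have bEq : ETm (.sub (.er Z0) (.cons (.er Zc) .id))
        (.er (.sub (toTm M) (.cons (valToTm (.mk .r C)) (envToSub e)))) := by
      refine .trans _ _ _ (cSubM _ (er_nfe hZ0)) ?_
      refine .trans _ _ _ (cSubS Z0 (cConsM .id (er_nfe hC.2))) ?_
      refine .trans _ _ _ (subst_beta φ hφGood Zc hC.2 M 0 true) ?_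
      exact .symm _ _ (sub_ev M _ _ relN).2
    exact .trans _ _ _ (cAnnQ _ tEq) (cAnn _ bEq)
  refine Relation.ReflTransGen.head (Or.inr eq1) ?_
  refine Relation.ReflTransGen.head (Or.inl step2) ?_
  exact Relation.ReflTransGen.single (Or.inr eq3)

end CAU
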